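/- arXiv:2207.06743 — 8 statements merged into one kernel-verified Lean document; each statement's English description precedes it below -/
import Mathlib

section
/- If a Cayley graph Cay(G,S) on a finite abelian group G with an inverse-closed connection set S of size 5 (not containing the identity) admits a perfect code, then S contains exactly one involution. -/
/-- The Cayley graph of an additive group `G` with connection set `S`. -/
def cayley (G : Type*) [AddGroup G] (S : Set G) : SimpleGraph G where
  Adj x y := x ≠ y ∧ (y - x ∈ S ∨ x - y ∈ S)
  symm := by
    constructor
    rintro x y ⟨h1, h2⟩
    exact ⟨h1.symm, h2.symm⟩
  loopless := by
    constructor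
    rintro x ⟨h1, -⟩
    exact h1 rfl

/-- A perfect code of a graph: every vertex is at distance at most one
from exactly one vertex of `D`. -/
def IsPerfectCode {V : Type*} (Γ : SimpleGraph V) (D : Set V) : Prop :=
  ∀ v : V, ∃! c : V, c ∈ D ∧ (v = c ∨ Γ.Adj v c)

/-- The generating relation of the graph `Γ_{m,l,h}`. -/
def gammaRel (m l h : ℕ) (p q : ZMod m × ZMod l) : Prop :=
  (q.1 = p.1 + 1 ∧ q.2 = p.2) ∨
  (q.1 = p.1 ∧ p.2.val ≠ l - 1 ∧ q.2 = p.2 + 1) ∨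
  (p.2.val = l - 1 ∧ q.1 = p.1 - (h : ZMod m) ∧ q.2 = 0)

/-- The graph `Γ_{m,l,h}` of Construction 2.1. -/
def Gamma (m l h : ℕ) : SimpleGraph (ZMod m × ZMod l) where
  Adj p q := p ≠ q ∧ (gammaRel m l h p q ∨ gammaRel m l h q p)
  symm := by
    constructor
    rintro p q ⟨h1, h2⟩
    exact ⟨h1.symm, h2.symm⟩
  loopless := by
    constructor
    rintro p ⟨h1, -⟩
    exact h1 rfl

/-- `tau n m` is the minimal positive divisor `j` of `m` with `gcd (n, m/j) = 1`. -/
noncomputable def tau (n m : ℕ) : ℕ := sInf {j : ℕ | 0 < j ∧ j ∣ m ∧ Nat.gcd n (m / j) = 1}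

/-- The graph `Γ'_{m,l,h}` of Construction 2.4. -/
def Gamma' (m l h : ℕ) : SimpleGraph (ZMod m × ZMod l) where
  Adj p q := p ≠ q ∧ (gammaRel m l h p q ∨ gammaRel m l h q p ∨
    (q.1 = p.1 + ((m / 2 : ℕ) : ZMod m) ∧ q.2 = p.2) ∨
    (p.1 = q.1 + ((m / 2 : ℕ) : ZMod m) ∧ p.2 = q.2))
  symm := by
    constructor
    rintro p q ⟨h1, h2⟩
    exact ⟨h1.symm, by tauto⟩
  loopless := by
    constructor
    rintro p ⟨h1, -⟩
    exact h1 rfl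

/-- The graph `Γ''_{m,l,h}` of Construction 2.7. -/
def Gamma'' (m l h : ℕ) : SimpleGraph (ZMod m × ZMod l) where
  Adj p q := p ≠ q ∧ (gammaRel m l h p q ∨ gammaRel m l h q p ∨
    (q.1 = p.1 + (((m + h - Nat.lcm h m : ℤ) / 2 : ℤ) : ZMod m) ∧
      p.2 = q.2 + ((l / 2 : ℕ) : ZMod l)) ∨
    (p.1 = q.1 + (((m + h - Nat.lcm h m : ℤ) / 2 : ℤ) : ZMod m) ∧
      q.2 = p.2 + ((l / 2 : ℕ) : ZMod l)))
  symm := by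
    constructor
    rintro p q ⟨h1, h2⟩
    exact ⟨h1.symm, by tauto⟩
  loopless := by
    constructor
    rintro p ⟨h1, -⟩
    exact h1 rfl

/-- `sigma2 n` is the 2-adic valuation of the natural number `n`. -/
def sigma2 (n : ℕ) : ℕ := padicValNat 2 n

/-- `sigma2Z n` is the 2-adic valuation of the integer `n`. -/
def sigma2Z (n : ℤ) : ℕ := padicValInt 2 n

set_option linter.unusedVariables false in



/-- A finset closed under negation with no 2-torsion elements has even cardinality. -/
lemma aux_even_card {G : Type*} [AddCommGroup G] [DecidableEq G] :
    ∀ F : Finset G, (∀ x ∈ F, -x ∈ F) → (∀ x ∈ F, -x ≠ x) → Even F.card := by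
  intro F
  induction F using Finset.strongInduction with
  | _ F ih =>
    intro hc hf
    rcases F.eq_empty_or_nonempty with rfl | ⟨x, hx⟩
    · simp
    · have h1 : -x ∈ F := hc x hx
      have h2 : -x ≠ x := hf x hx
      have hsub : ({x, -x} : Finset G) ⊆ F := by
        intro y hy
        simp only [Finset.mem_insert, Finset.mem_singleton] at hy
        rcases hy with rfl | rfl <;> assumption
      have hss : F \ {x, -x} ⊂ F := Finset.sdiff_ssubset hsub ⟨x, by simp⟩
      have hcard : ({x, -x} : Finset G).card = 2 := Finset.card_pair (Ne.symm h2)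
      have hE := ih _ hss ?_ ?_
      · have h5 : (F \ {x, -x}).card = F.card - 2 := by
          rw [Finset.card_sdiff_of_subset hsub, hcard]
        have h6 : 2 ≤ F.card := by
          calc 2 = ({x, -x} : Finset G).card := hcard.symm
          _ ≤ F.card := Finset.card_le_card hsub
        rcases hE with ⟨r, hr⟩
        exact ⟨r + 1, by omega⟩
      · intro y hy
        rw [Finset.mem_sdiff] at hy ⊢
        obtain ⟨hyF, hyn⟩ := hy
        refine ⟨hc y hyF, ?_⟩
        simp only [Finset.mem_insert, Finset.mem_singleton] at hyn ⊢
        push_neg at hyn ⊢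
        exact ⟨fun h => hyn.2 (by rw [← h, neg_neg]), fun h => hyn.1 (neg_injective h)⟩
      · intro y hy
        exact hf y (Finset.mem_sdiff.mp hy).1



lemma aux_no_code {G : Type*} [AddCommGroup G] [Fintype G] [DecidableEq G] (u v w b d : G)
    (hu : u + u = 0) (hv : v + v = 0) (hw : w + w = 0)
    (hu0 : u ≠ 0) (hv0 : v ≠ 0) (hw0 : w ≠ 0) (hb0 : b ≠ 0) (hd0 : d ≠ 0)
    (huv : u ≠ v) (huw : u ≠ w) (hvw : v ≠ w)
    (hbu : b ≠ u) (hbv : b ≠ v) (hbw : b ≠ w)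
    (hdu : d ≠ u) (hdv : d ≠ v) (hdw : d ≠ w) (hbd : b ≠ d)
    (D : Finset G)
    (htile : ∀ x : G, ∃! c : G, c ∈ D ∧ x - c ∈ ({0, u, v, w, b, d} : Finset G)) :
    False := by
  classical
  set Nf : Finset G := {0, u, v, w, b, d} with hNf
  set H : AddSubgroup G := AddSubgroup.closure {u, v, w} with hHdef
  have huH : u ∈ H := AddSubgroup.subset_closure (by simp)
  have hvH : v ∈ H := AddSubgroup.subset_closure (by simp)
  have hwH : w ∈ H := AddSubgroup.subset_closure (by simp)
  -- every element of H is 2-torsion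
  have h2tor : ∀ x ∈ H, x + x = 0 := by
    intro x hx
    induction hx using AddSubgroup.closure_induction with
    | mem y hy => rcases hy with rfl | rfl | rfl <;> assumption
    | zero => simp
    | add x y hx hy px py =>
        have : x + y + (x + y) = (x + x) + (y + y) := by abel
        rw [this, px, py, add_zero]
    | neg x hx px => rw [← neg_add, px, neg_zero]
  -- H has at most 8 elements
  have hcond : ∀ (t : Bool) (z : G), z ∈ H → (cond t z 0) ∈ H := by
    intro t z hz; cases t
    · exact H.zero_mem
    · exact hz
  set ψ : Bool × Bool × Bool → G :=
    fun e => (cond e.1 u 0) + (cond e.2.1 v 0) + (cond e.2.2 w 0) with hψ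
  have hψH : ∀ e, ψ e ∈ H := fun e =>
    H.add_mem (H.add_mem (hcond _ _ huH) (hcond _ _ hvH)) (hcond _ _ hwH)
  have hcondadd : ∀ (s t : Bool) (z : G), z + z = 0 →
      cond (xor s t) z 0 = cond s z 0 + cond t z 0 := by
    intro s t z h; cases s <;> cases t <;> simp [h.symm]
  have hψsurj : ∀ x ∈ H, ∃ e, ψ e = x := by
    intro x hx
    induction hx using AddSubgroup.closure_induction with
    | mem y hy =>
        rcases hy with rfl | rfl | rfl
        · exact ⟨(true, false, false), by simp [hψ]⟩
        · exact ⟨(false, true, false), by simp [hψ]⟩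
        · exact ⟨(false, false, true), by simp [hψ]⟩
    | zero => exact ⟨(false, false, false), by simp [hψ]⟩
    | add x y hx hy px py =>
        obtain ⟨e, he⟩ := px
        obtain ⟨e', he'⟩ := py
        refine ⟨(xor e.1 e'.1, xor e.2.1 e'.2.1, xor e.2.2 e'.2.2), ?_⟩
        simp only [hψ]
        rw [hcondadd _ _ _ hu, hcondadd _ _ _ hv, hcondadd _ _ _ hw]
        rw [← he, ← he']
        simp only [hψ]
        abel
    | neg x hx px =>
        obtain ⟨e, he⟩ := px
        exact ⟨e, by rw [neg_eq_of_add_eq_zero_left (h2tor x hx), he]⟩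
  haveI : Nonempty (↥H) := ⟨⟨0, H.zero_mem⟩⟩
  set m : ℕ := Fintype.card ↥H with hm
  have hm8 : m ≤ 8 := by
    have hs : Function.Surjective (fun e => (⟨ψ e, hψH e⟩ : ↥H)) := by
      rintro ⟨x, hx⟩
      obtain ⟨e, he⟩ := hψsurj x hx
      exact ⟨e, Subtype.ext he⟩
    have := Fintype.card_le_of_surjective _ hs
    simpa using this
  have hm0 : 0 < m := Fintype.card_pos
  have hm6 : m ≠ 6 := by
    intro h6
    haveI : Fact (Nat.Prime 3) := ⟨by norm_num⟩
    obtain ⟨x, hx3⟩ := exists_prime_addOrderOf_dvd_card (G := ↥H) 3 (by rw [← hm, h6]; norm_num)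
    have hxx : x + x = 0 := Subtype.ext (h2tor x.1 x.2)
    have : addOrderOf x ∣ 2 := addOrderOf_dvd_of_nsmul_eq_zero (by rw [two_nsmul, hxx])
    rw [hx3] at this
    omega
  -- the code function
  have hfex : ∀ x : G, (htile x).choose ∈ D ∧ x - (htile x).choose ∈ Nf :=
    fun x => (htile x).choose_spec.1
  have hfun : ∀ (x c : G), c ∈ D → x - c ∈ Nf → c = (htile x).choose :=
    fun x c h1 h2 => (htile x).choose_spec.2 c ⟨h1, h2⟩
  set f : G → G := fun x => (htile x).choose with hf
  set n : G → ℕ := fun g => (D.filter fun c => c - g ∈ H).card with hn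
  -- coset cardinality
  have key1 : ∀ g : G, (Finset.univ.filter fun x : G => x - g ∈ H).card = m := by
    intro g
    have himg : (Finset.univ.filter fun x : G => x - g ∈ H)
        = (Finset.univ.filter fun x : G => x ∈ H).image (· + g) := by
      ext x
      simp only [Finset.mem_filter, Finset.mem_univ, true_and, Finset.mem_image]
      constructor
      · intro hx
        exact ⟨x - g, hx, sub_add_cancel x g⟩
      · rintro ⟨y, hy, rfl⟩
        simpa using hy
    rw [himg, Finset.card_image_of_injective _ (add_left_injective g), hm,
      Fintype.card_subtype]
  -- fiberwise counting
  have key2 : ∀ g : G, (Finset.univ.filter fun x : G => x - g ∈ H).card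
      = ∑ c ∈ D, ((Finset.univ.filter fun x : G => x - g ∈ H).filter
        fun x => x - c ∈ Nf).card := by
    intro g
    rw [Finset.card_eq_sum_card_fiberwise (f := f) (t := D) (fun x _ => (hfex x).1)]
    refine Finset.sum_congr rfl (fun c hc => ?_)
    congr 1
    apply Finset.filter_congr
    intro x _
    constructor
    · intro hfc
      rw [← hfc]
      exact (hfex x).2
    · intro hmem
      exact (hfun x c hc hmem).symm
  -- per-code-element count within a coset
  have key3 : ∀ g c : G, ((Finset.univ.filter fun x : G => x - g ∈ H).filter
      fun x => x - c ∈ Nf).card = (Nf.filter fun s => c + s - g ∈ H).card := by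
    intro g c
    rw [Finset.filter_filter]
    have himg : (Finset.univ.filter fun x : G => x - g ∈ H ∧ x - c ∈ Nf)
        = (Nf.filter fun s => c + s - g ∈ H).image (c + ·) := by
      ext x
      simp only [Finset.mem_filter, Finset.mem_univ, true_and, Finset.mem_image]
      constructor
      · rintro ⟨h1, h2⟩
        refine ⟨x - c, ⟨h2, ?_⟩, by abel⟩
        have : c + (x - c) - g = x - g := by abel
        rw [this]; exact h1
      · rintro ⟨s, ⟨hs, hmem⟩, rfl⟩
        refine ⟨hmem, ?_⟩
        have : c + s - c = s := by abel
        rw [this]; exact hs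
    rw [himg, Finset.card_image_of_injective _ (add_right_injective c)]
  -- evaluating the inner count
  have key4 : ∀ g c : G, (Nf.filter fun s => c + s - g ∈ H).card
      = ((if c - g ∈ H then 1 else 0) + (if c - g ∈ H then 1 else 0)
        + (if c - g ∈ H then 1 else 0) + (if c - g ∈ H then 1 else 0)
        + (if c - (g - b) ∈ H then 1 else 0) + (if c - (g - d) ∈ H then 1 else 0) : ℕ) := by
    intro g c
    have e0 : c + 0 - g = c - g := by abel
    have eu : c + u - g = c - g + u := by abel
    have ev : c + v - g = c - g + v := by abel
    have ew : c + w - g = c - g + w := by abel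
    have eb : c + b - g = c - (g - b) := by abel
    have ed : c + d - g = c - (g - d) := by abel
    rw [Finset.card_filter, hNf]
    rw [Finset.sum_insert (by simp [Ne.symm hu0, Ne.symm hv0, Ne.symm hw0, Ne.symm hb0,
      Ne.symm hd0])]
    rw [Finset.sum_insert (by simp [huv, huw, Ne.symm hbu, Ne.symm hdu])]
    rw [Finset.sum_insert (by simp [hvw, Ne.symm hbv, Ne.symm hdv])]
    rw [Finset.sum_insert (by simp [Ne.symm hbw, Ne.symm hdw])]
    rw [Finset.sum_insert (by simp [hbd])]
    rw [Finset.sum_singleton]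
    rw [e0, eu, ev, ew, eb, ed,
      AddSubgroup.add_mem_cancel_right H huH,
      AddSubgroup.add_mem_cancel_right H hvH,
      AddSubgroup.add_mem_cancel_right H hwH]
    ring
  -- the key equation
  have key5 : ∀ g : G, m = n g + n g + n g + n g + n (g - b) + n (g - d) := by
    intro g
    have := key2 g
    rw [key1 g] at this
    rw [this]
    rw [Finset.sum_congr rfl (fun c _ => by rw [key3 g c, key4 g c])]
    simp only [Finset.sum_add_distrib]
    simp only [hn, Finset.card_filter]
  -- the arithmetic endgame
  have hub : ∀ g : G, 4 * n g ≤ m := fun g => by have := key5 g; omega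
  have hpos : ∀ g : G, 1 ≤ n g := by
    intro g
    by_contra h'
    have h0 : n g = 0 := by omega
    have e := key5 g
    have := hub (g - b)
    have := hub (g - d)
    omega
  have hone : ∀ g : G, n g = 1 := by
    intro g
    have := key5 g
    have := hpos g
    have := hpos (g - b)
    have := hpos (g - d)
    omega
  have := key5 0
  rw [hone 0, hone (0 - b), hone (0 - d)] at this
  omega


set_option linter.unusedVariables false in
theorem stmt0 (G : Type*) [AddCommGroup G] [Fintype G] (S : Set G)
    (h0 : (0 : G) ∉ S) (hinv : ∀ x ∈ S, -x ∈ S) (h5 : S.ncard = 5)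
    (hgen : AddSubgroup.closure S = ⊤) (D : Set G)
    (hD : IsPerfectCode (cayley G S) D) :
    ∃! t : G, t ∈ S ∧ addOrderOf t = 2 := by
  classical
  have hSfin : S.Finite := Set.toFinite S
  set Sf : Finset G := hSfin.toFinset with hSfdef
  have hmemS : ∀ x, x ∈ Sf ↔ x ∈ S := fun x => hSfin.mem_toFinset
  have hScard : Sf.card = 5 := by
    rw [← Set.ncard_eq_toFinset_card S hSfin]; exact h5
  set Df : Finset G := (Set.toFinite D).toFinset with hDfdef
  have hmemD : ∀ x, x ∈ Df ↔ x ∈ D := fun x => (Set.toFinite D).mem_toFinset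
  -- translation of the perfect-code condition
  have hAdj : ∀ x c : G, (cayley G S).Adj x c ↔ (x ≠ c ∧ (c - x ∈ S ∨ x - c ∈ S)) :=
    fun x c => Iff.rfl
  have htile0 : ∀ x : G, ∃! c : G, c ∈ Df ∧ (x - c = 0 ∨ x - c ∈ S) := by
    intro x
    refine (existsUnique_congr fun c => ?_).mp (hD x)
    rw [hmemD]
    refine and_congr_right fun _ => ?_
    rw [hAdj]
    constructor
    · rintro (rfl | ⟨hne, hs | hs⟩)
      · exact Or.inl (sub_self x)
      · refine Or.inr ?_
        rw [← neg_sub]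
        exact hinv _ hs
      · exact Or.inr hs
    · rintro (he | hs)
      · exact Or.inl (sub_eq_zero.mp he)
      · refine Or.inr ⟨?_, Or.inr hs⟩
        intro h
        rw [h, sub_self] at hs
        exact h0 hs
  -- the central contradiction: no two distinct involutions in S
  have hcontra : ∀ t t' : G, t ∈ S → t' ∈ S → t + t = 0 → t' + t' = 0 → t ≠ t' → False := by
    intro t t' htS ht'S htt ht't' hne
    set T : Finset G := Sf.filter (fun x => x + x = 0) with hTdef
    have hTsub : T ⊆ Sf := Finset.filter_subset _ _
    have hREven : Even (Sf \ T).card := by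
      refine aux_even_card _ ?_ ?_
      · intro y hy
        rw [Finset.mem_sdiff] at hy ⊢
        obtain ⟨hySf, hyT⟩ := hy
        have hyS : y ∈ S := (hmemS y).mp hySf
        have hyn : -y ∈ Sf := (hmemS _).mpr (hinv y hyS)
        refine ⟨hyn, ?_⟩
        rw [hTdef, Finset.mem_filter]
        rintro ⟨-, hzz⟩
        rw [hTdef, Finset.mem_filter] at hyT
        push_neg at hyT
        refine hyT hySf ?_
        have : -(y + y) = 0 := by rw [neg_add]; exact hzz
        rwa [neg_eq_zero] at this
      · intro y hy
        rw [Finset.mem_sdiff, hTdef, Finset.mem_filter] at hy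
        push_neg at hy
        intro h
        exact hy.2 hy.1 (by rw [← neg_eq_iff_add_eq_zero]; exact h)
    have htT : t ∈ T := Finset.mem_filter.mpr ⟨(hmemS t).mpr htS, htt⟩
    have ht'T : t' ∈ T := Finset.mem_filter.mpr ⟨(hmemS t').mpr ht'S, ht't'⟩
    have hpairT : ({t, t'} : Finset G) ⊆ T := by
      intro y hy
      simp only [Finset.mem_insert, Finset.mem_singleton] at hy
      rcases hy with rfl | rfl <;> assumption
    have h2le : 2 ≤ T.card := by
      calc 2 = ({t, t'} : Finset G).card := (Finset.card_pair hne).symm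
      _ ≤ T.card := Finset.card_le_card hpairT
    have hsdcard : (Sf \ T).card = Sf.card - T.card := Finset.card_sdiff_of_subset hTsub
    have hTle : T.card ≤ Sf.card := Finset.card_le_card hTsub
    have hT3 : 3 ≤ T.card := by
      obtain ⟨r, hr⟩ := hREven
      omega
    have hzex : (T \ {t, t'}).Nonempty := by
      rw [← Finset.card_pos, Finset.card_sdiff_of_subset hpairT, Finset.card_pair hne]
      omega
    obtain ⟨z, hz⟩ := hzex
    rw [Finset.mem_sdiff] at hz
    obtain ⟨hzT, hzne⟩ := hz
    simp only [Finset.mem_insert, Finset.mem_singleton] at hzne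
    push_neg at hzne
    obtain ⟨hzt, hzt'⟩ := hzne
    have hzS : z ∈ S := (hmemS z).mp (hTsub hzT)
    have hzz : z + z = 0 := (Finset.mem_filter.mp hzT).2
    -- the remaining two elements of S
    have hsub3 : ({t, t', z} : Finset G) ⊆ Sf := by
      intro y hy
      simp only [Finset.mem_insert, Finset.mem_singleton] at hy
      rcases hy with rfl | rfl | rfl
      · exact (hmemS _).mpr htS
      · exact (hmemS _).mpr ht'S
      · exact hTsub hzT
    have hcard3 : ({t, t', z} : Finset G).card = 3 := by
      rw [Finset.card_insert_of_notMem (by simp [hne, hzt.symm]),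
        Finset.card_insert_of_notMem (by simp [hzt'.symm]), Finset.card_singleton]
    have hrem2 : (Sf \ {t, t', z}).card = 2 := by
      rw [Finset.card_sdiff_of_subset hsub3, hcard3, hScard]
    obtain ⟨b, d, hbd, hbdE⟩ := Finset.card_eq_two.mp hrem2
    have hbmem : b ∈ Sf \ ({t, t', z} : Finset G) := by rw [hbdE]; simp
    have hdmem : d ∈ Sf \ ({t, t', z} : Finset G) := by rw [hbdE]; simp
    rw [Finset.mem_sdiff] at hbmem hdmem
    simp only [Finset.mem_insert, Finset.mem_singleton] at hbmem hdmem
    push_neg at hbmem hdmem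
    obtain ⟨hbSf, hbt, hbt', hbz⟩ := hbmem
    obtain ⟨hdSf, hdt, hdt', hdz⟩ := hdmem
    have hSeq : Sf = ({t, t', z, b, d} : Finset G) := by
      have := Finset.union_sdiff_of_subset hsub3
      rw [hbdE] at this
      rw [← this]
      ext y
      simp only [Finset.mem_union, Finset.mem_insert, Finset.mem_singleton]
      tauto
    -- tiling in finset form
    have htile : ∀ x : G, ∃! c : G, c ∈ Df ∧ x - c ∈ ({0, t, t', z, b, d} : Finset G) := by
      intro x
      refine (existsUnique_congr fun c => ?_).mp (htile0 x)
      refine and_congr_right fun _ => ?_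
      have : x - c ∈ S ↔ x - c ∈ ({t, t', z, b, d} : Finset G) := by
        rw [← hmemS, hSeq]
      simp only [Finset.mem_insert, Finset.mem_singleton] at this ⊢
      rw [this]
    exact aux_no_code t t' z b d htt ht't' hzz
      (fun h => h0 (h ▸ htS)) (fun h => h0 (h ▸ ht'S)) (fun h => h0 (h ▸ hzS))
      (fun h => h0 (h ▸ ((hmemS b).mp hbSf))) (fun h => h0 (h ▸ ((hmemS d).mp hdSf)))
      hne (Ne.symm hzt) (Ne.symm hzt') hbt hbt' hbz hdt hdt' hdz hbd Df htile
  -- existence of an involution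
  have hTne : ∃ t ∈ S, t + t = 0 := by
    by_contra hno
    push_neg at hno
    have hEv : Even Sf.card := by
      refine aux_even_card Sf ?_ ?_
      · intro y hy
        exact (hmemS _).mpr (hinv y ((hmemS y).mp hy))
      · intro y hy h
        exact hno y ((hmemS y).mp hy) (by rw [← neg_eq_iff_add_eq_zero]; exact h)
    rw [hScard] at hEv
    obtain ⟨r, hr⟩ := hEv
    omega
  obtain ⟨t, htS, htt⟩ := hTne
  haveI : Fact (Nat.Prime 2) := ⟨Nat.prime_two⟩
  refine ⟨t, ⟨htS, ?_⟩, ?_⟩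
  · exact addOrderOf_eq_prime (by rw [two_nsmul]; exact htt) (fun h => h0 (h ▸ htS))
  · rintro t' ⟨ht'S, ht'ord⟩
    by_contra hne
    have ht't' : t' + t' = 0 := by
      rw [← two_nsmul, ← ht'ord]
      exact addOrderOf_nsmul_eq_zero t'
    exact hcontra t' t ht'S htS ht't' htt hne
end

section
/- Let Cay(G,S) be a connected quintic Cayley graph on a finite abelian group with S = {s, -s, s', -s', s₀} where s₀ is an involution and s, s' have order greater than 2. If Cay(G,S) admits a perfect code, then the product of the orders of s and s' is even. -/
section Aux

variable {G : Type*} [AddCommGroup G] [Fintype G]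

lemma code_translate {S D : Set G} (hD : IsPerfectCode (cayley G S) D) (t : G) :
    IsPerfectCode (cayley G S) ((fun x => x + t) ⁻¹' D) := by
  have hadj : ∀ x y : G, (cayley G S).Adj x y ↔ (cayley G S).Adj (x + t) (y + t) := by
    intro x y
    constructor <;> rintro ⟨h1, h2⟩
    · exact ⟨by intro h; exact h1 (add_right_cancel h),
        by rwa [add_sub_add_right_eq_sub, add_sub_add_right_eq_sub]⟩
    · exact ⟨by intro h; exact h1 (by rw [h]),
        by rwa [add_sub_add_right_eq_sub, add_sub_add_right_eq_sub] at h2⟩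
  intro v
  obtain ⟨c, ⟨hcD, hcv⟩, hu⟩ := hD (v + t)
  have hct : c - t + t = c := by abel
  refine ⟨c - t, ⟨?_, ?_⟩, ?_⟩
  · show (c - t) + t ∈ D
    rwa [hct]
  · rcases hcv with h | h
    · left; exact eq_sub_of_add_eq h
    · right
      rw [hadj _ _, hct]
      exact h
  · rintro y ⟨hyD, hyv⟩
    have hyc : y + t = c := by
      refine hu (y + t) ⟨hyD, ?_⟩
      rcases hyv with h | h
      · left; rw [h]
      · right; exact (hadj v y).mp h
    exact eq_sub_of_add_eq hyc

lemma count_lemma (s s' s₀ : G) (H : AddSubgroup G)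
    (hsH : s ∈ H) (hs'H : s' ∈ H) (hs₀H : s₀ ∉ H)
    (hcoset : ∀ g : G, g ∈ H ∨ g - s₀ ∈ H)
    (h2s₀ : s₀ + s₀ = 0) (hs₀0 : s₀ ≠ 0)
    (hs0 : s ≠ 0) (hs'0 : s' ≠ 0)
    (h2s : s + s ≠ 0) (h2s' : s' + s' ≠ 0)
    (hss' : s ≠ s') (hsns' : s ≠ -s')
    (D : Set G)
    (hD : IsPerfectCode (cayley G ({s, -s, s', -s', s₀} : Set G)) D) :
    (H : Set G).ncard = 5 * (D ∩ H).ncard + (D \ (H : Set G)).ncard := by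
  classical
  set S : Set G := {s, -s, s', -s', s₀} with hSdef
  have hnegs₀ : -s₀ = s₀ := neg_eq_of_add_eq_zero_left h2s₀
  have hSneg : ∀ a ∈ S, -a ∈ S := by
    intro a ha
    simp only [hSdef, Set.mem_insert_iff, Set.mem_singleton_iff] at ha ⊢
    rcases ha with rfl | rfl | rfl | rfl | rfl <;> simp [hnegs₀]
  have hAdj : ∀ x y : G, (cayley G S).Adj x y ↔ x ≠ y ∧ y - x ∈ S := by
    intro x y
    constructor
    · rintro ⟨h1, h2 | h2⟩
      · exact ⟨h1, h2⟩
      · refine ⟨h1, ?_⟩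
        have := hSneg _ h2
        rwa [neg_sub] at this
    · rintro ⟨h1, h2⟩
      exact ⟨h1, Or.inl h2⟩
  set f : G → G := fun x => (hD x).choose with hfdef
  have hfD : ∀ x : G, f x ∈ D := fun x => (hD x).choose_spec.1.1
  have hfx : ∀ x : G, x = f x ∨ (cayley G S).Adj x (f x) := fun x => (hD x).choose_spec.1.2
  have hfu : ∀ x c, c ∈ D → (x = c ∨ (cayley G S).Adj x c) → c = f x :=
    fun x c h1 h2 => (hD x).choose_spec.2 c ⟨h1, h2⟩
  set HF : Finset G := (H : Set G).toFinset with hHF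
  set DF : Finset G := D.toFinset with hDFdef
  have key : HF.card = ∑ c ∈ DF, (HF.filter fun x => f x = c).card :=
    Finset.card_eq_sum_card_fiberwise (fun x _ => Set.mem_toFinset.2 (hfD x))
  have fiber_in : ∀ c ∈ DF, c ∈ H → (HF.filter fun x => f x = c).card = 5 := by
    intro c hcDF hcH
    have hcD : c ∈ D := Set.mem_toFinset.1 hcDF
    have hset : HF.filter (fun x => f x = c) = {c, c + s, c - s, c + s', c - s'} := by
      ext x
      simp only [Finset.mem_filter, hHF, Set.mem_toFinset, SetLike.mem_coe,
        Finset.mem_insert, Finset.mem_singleton]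
      constructor
      · rintro ⟨hxH, hfc⟩
        rcases hfx x with h | h
        · rw [hfc] at h
          exact Or.inl h
        · rw [hfc, hAdj] at h
          obtain ⟨hne, hmem⟩ := h
          simp only [hSdef, Set.mem_insert_iff, Set.mem_singleton_iff] at hmem
          rcases hmem with h | h | h | h | h
          · right; right; left
            rw [← h]
            exact (sub_sub_cancel c x).symm
          · right; left
            rw [← sub_neg_eq_add, ← h]
            exact (sub_sub_cancel c x).symm
          · right; right; right; right
            rw [← h]
            exact (sub_sub_cancel c x).symm
          · right; right; right; left
            rw [← sub_neg_eq_add, ← h]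
            exact (sub_sub_cancel c x).symm
          · exact absurd (h ▸ sub_mem hcH hxH) hs₀H
      · have hs'S : s' ∈ S := by simp [hSdef]
        have hsS : s ∈ S := by simp [hSdef]
        have hnsS : -s ∈ S := by simp [hSdef]
        have hns'S : -s' ∈ S := by simp [hSdef]
        rintro (h | rfl | rfl | rfl | rfl)
        · subst h
          exact ⟨hcH, (hfu x x hcD (Or.inl rfl)).symm⟩
        · refine ⟨add_mem hcH hsH, (hfu _ c hcD (Or.inr ?_)).symm⟩
          rw [hAdj]
          refine ⟨fun h => hs0 (by simpa using h), ?_⟩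
          have : c - (c + s) = -s := by abel
          rw [this]; exact hnsS
        · refine ⟨sub_mem hcH hsH, (hfu _ c hcD (Or.inr ?_)).symm⟩
          rw [hAdj]
          refine ⟨fun h => hs0 (by simpa using sub_eq_self.mp h), ?_⟩
          rw [sub_sub_cancel]; exact hsS
        · refine ⟨add_mem hcH hs'H, (hfu _ c hcD (Or.inr ?_)).symm⟩
          rw [hAdj]
          refine ⟨fun h => hs'0 (by simpa using h), ?_⟩
          have : c - (c + s') = -s' := by abel
          rw [this]; exact hns'S
        · refine ⟨sub_mem hcH hs'H, (hfu _ c hcD (Or.inr ?_)).symm⟩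
          rw [hAdj]
          refine ⟨fun h => hs'0 (by simpa using sub_eq_self.mp h), ?_⟩
          rw [sub_sub_cancel]; exact hs'S
    have ne1 : c ≠ c + s := fun h => hs0 (by simpa using h)
    have ne2 : c ≠ c - s := fun h => hs0 (by simpa using sub_eq_self.mp h.symm)
    have ne3 : c ≠ c + s' := fun h => hs'0 (by simpa using h)
    have ne4 : c ≠ c - s' := fun h => hs'0 (by simpa using sub_eq_self.mp h.symm)
    have ne5 : c + s ≠ c - s := by
      intro h
      rw [sub_eq_add_neg] at h
      exact h2s (add_eq_zero_iff_eq_neg.mpr (add_left_cancel h))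
    have ne6 : c + s ≠ c + s' := fun h => hss' (add_left_cancel h)
    have ne7 : c + s ≠ c - s' := by
      intro h
      rw [sub_eq_add_neg] at h
      exact hsns' (add_left_cancel h)
    have ne8 : c - s ≠ c + s' := by
      intro h
      rw [sub_eq_add_neg] at h
      exact hsns' (neg_eq_iff_eq_neg.mp (add_left_cancel h))
    have ne9 : c - s ≠ c - s' := fun h => hss' (sub_right_inj.mp h)
    have ne10 : c + s' ≠ c - s' := by
      intro h
      rw [sub_eq_add_neg] at h
      exact h2s' (add_eq_zero_iff_eq_neg.mpr (add_left_cancel h))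
    rw [hset]
    rw [Finset.card_insert_of_notMem (by simp [ne1, ne2, ne3, ne4]),
      Finset.card_insert_of_notMem (by simp [ne5, ne6, ne7]),
      Finset.card_insert_of_notMem (by simp [ne8, ne9]),
      Finset.card_insert_of_notMem (by simp [ne10]),
      Finset.card_singleton]
  have fiber_out : ∀ c ∈ DF, c ∉ H → (HF.filter fun x => f x = c).card = 1 := by
    intro c hcDF hcH
    have hcD : c ∈ D := Set.mem_toFinset.1 hcDF
    have hcH' : c - s₀ ∈ H := (hcoset c).resolve_left hcH
    have hset : HF.filter (fun x => f x = c) = {c - s₀} := by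
      ext x
      simp only [Finset.mem_filter, hHF, Set.mem_toFinset, SetLike.mem_coe,
        Finset.mem_singleton]
      constructor
      · rintro ⟨hxH, hfc⟩
        rcases hfx x with h | h
        · rw [hfc] at h
          exact absurd (h ▸ hxH) hcH
        · rw [hfc, hAdj] at h
          obtain ⟨hne, hmem⟩ := h
          simp only [hSdef, Set.mem_insert_iff, Set.mem_singleton_iff] at hmem
          have hdecomp : (c - x) + x = c := by abel
          rcases hmem with h | h | h | h | h
          · exact absurd (by rw [← hdecomp, h]; exact add_mem hsH hxH) hcH
          · exact absurd (by rw [← hdecomp, h]; exact add_mem (neg_mem hsH) hxH) hcH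
          · exact absurd (by rw [← hdecomp, h]; exact add_mem hs'H hxH) hcH
          · exact absurd (by rw [← hdecomp, h]; exact add_mem (neg_mem hs'H) hxH) hcH
          · rw [← h]
            exact (sub_sub_cancel c x).symm
      · rintro rfl
        refine ⟨hcH', (hfu _ c hcD (Or.inr ?_)).symm⟩
        rw [hAdj]
        refine ⟨fun h => hs₀0 (sub_eq_self.mp h), ?_⟩
        rw [sub_sub_cancel]
        simp [hSdef]
    rw [hset, Finset.card_singleton]
  have split := Finset.sum_filter_add_sum_filter_not DF (fun c => c ∈ H)
    (fun c => (HF.filter fun x => f x = c).card)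
  have e1 : ∑ c ∈ DF.filter (fun c => c ∈ H), (HF.filter fun x => f x = c).card
      = 5 * (DF.filter (fun c => c ∈ H)).card := by
    rw [Finset.sum_congr rfl
      (fun c hc => fiber_in c (Finset.mem_filter.1 hc).1 (Finset.mem_filter.1 hc).2),
      Finset.sum_const, smul_eq_mul, mul_comm]
  have e2 : ∑ c ∈ DF.filter (fun c => ¬ c ∈ H), (HF.filter fun x => f x = c).card
      = (DF.filter (fun c => ¬ c ∈ H)).card := by
    rw [Finset.sum_congr rfl
      (fun c hc => fiber_out c (Finset.mem_filter.1 hc).1 (Finset.mem_filter.1 hc).2),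
      Finset.sum_const, smul_eq_mul, mul_one]
  have hf1 : DF.filter (fun c => c ∈ H) = (D ∩ (H : Set G)).toFinset := by
    ext x
    simp [hDFdef]
  have hf2 : DF.filter (fun c => ¬ c ∈ H) = (D \ (H : Set G)).toFinset := by
    ext x
    simp [hDFdef]
  rw [Set.ncard_eq_toFinset_card', Set.ncard_eq_toFinset_card', Set.ncard_eq_toFinset_card']
  rw [← hf1, ← hf2]
  calc HF.card = ∑ c ∈ DF, (HF.filter fun x => f x = c).card := key
    _ = _ + _ := split.symm
    _ = 5 * (DF.filter (fun c => c ∈ H)).card + (DF.filter (fun c => ¬ c ∈ H)).card := by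
        rw [e1, e2]

end Aux

lemma ncard3_le {G : Type*} (a b c : G) : ({a, b, c} : Set G).ncard ≤ 3 := by
  have h1 := Set.ncard_insert_le a ({b, c} : Set G)
  have h2 := Set.ncard_insert_le b ({c} : Set G)
  have h3 : ({c} : Set G).ncard = 1 := Set.ncard_singleton c
  omega

theorem stmt1 (G : Type*) [AddCommGroup G] [Fintype G] (s s' s₀ : G)
    (h5 : ({s, -s, s', -s', s₀} : Set G).ncard = 5)
    (h0 : addOrderOf s₀ = 2) (hs : 2 < addOrderOf s) (hs' : 2 < addOrderOf s')
    (hgen : AddSubgroup.closure ({s, -s, s', -s', s₀} : Set G) = ⊤)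
    (D : Set G)
    (hD : IsPerfectCode (cayley G ({s, -s, s', -s', s₀} : Set G)) D) :
    2 ∣ addOrderOf s * addOrderOf s' := by
  by_contra hodd
  have hs0 : s ≠ 0 := by intro h; rw [h, addOrderOf_zero] at hs; omega
  have hs'0 : s' ≠ 0 := by intro h; rw [h, addOrderOf_zero] at hs'; omega
  have hs₀0 : s₀ ≠ 0 := by intro h; rw [h, addOrderOf_zero] at h0; omega
  have h2s : s + s ≠ 0 := by
    intro h
    have h1 : addOrderOf s ∣ 2 := by
      rw [addOrderOf_dvd_iff_nsmul_eq_zero, two_nsmul]; exact h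
    have := Nat.le_of_dvd (by norm_num) h1; omega
  have h2s' : s' + s' ≠ 0 := by
    intro h
    have h1 : addOrderOf s' ∣ 2 := by
      rw [addOrderOf_dvd_iff_nsmul_eq_zero, two_nsmul]; exact h
    have := Nat.le_of_dvd (by norm_num) h1; omega
  have h2s₀ : s₀ + s₀ = 0 := by rw [← two_nsmul, ← h0]; exact addOrderOf_nsmul_eq_zero s₀
  have hnegs₀ : -s₀ = s₀ := neg_eq_of_add_eq_zero_left h2s₀
  have hss' : s ≠ s' := by
    intro h
    rw [← h] at h5
    have hEq : ({s, -s, s, -s, s₀} : Set G) = {s, -s, s₀} := by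
      ext x; simp only [Set.mem_insert_iff, Set.mem_singleton_iff]; tauto
    rw [hEq] at h5
    have := ncard3_le s (-s) s₀
    omega
  have hsns' : s ≠ -s' := by
    intro h
    rw [h] at h5
    have hEq : ({-s', -(-s'), s', -s', s₀} : Set G) = {-s', s', s₀} := by
      ext x; simp only [Set.mem_insert_iff, Set.mem_singleton_iff, neg_neg]; tauto
    rw [hEq] at h5
    have := ncard3_le (-s') s' s₀
    omega
  set H : AddSubgroup G := AddSubgroup.closure {s, s'} with hHdef
  have hsH : s ∈ H := AddSubgroup.subset_closure (by simp)
  have hs'H : s' ∈ H := AddSubgroup.subset_closure (by simp)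
  set φ : (AddSubgroup.zmultiples s) × (AddSubgroup.zmultiples s') →+ G :=
    ((AddSubgroup.zmultiples s).subtype).coprod ((AddSubgroup.zmultiples s').subtype) with hφ
  have hφr : φ.range = H := by
    apply le_antisymm
    · rintro g hg
      obtain ⟨⟨x, y⟩, rfl⟩ := hg
      have hx : (x : G) ∈ H := by
        obtain ⟨k, hk⟩ := x.2
        exact hk ▸ zsmul_mem hsH k
      have hy : (y : G) ∈ H := by
        obtain ⟨k, hk⟩ := y.2
        exact hk ▸ zsmul_mem hs'H k
      show φ (x, y) ∈ H
      simp only [hφ, AddMonoidHom.coprod_apply, AddSubgroup.coe_subtype]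
      exact add_mem hx hy
    · rw [hHdef]
      apply (AddSubgroup.closure_le _).mpr
      intro a ha
      simp only [Set.mem_insert_iff, Set.mem_singleton_iff] at ha
      rcases ha with rfl | rfl
      · exact ⟨(⟨a, AddSubgroup.mem_zmultiples a⟩, 0), by simp [hφ]⟩
      · exact ⟨(0, ⟨a, AddSubgroup.mem_zmultiples a⟩), by simp [hφ]⟩
  have hdvd : Nat.card H ∣ addOrderOf s * addOrderOf s' := by
    have h1 : Nat.card φ.range ∣
        Nat.card ((AddSubgroup.zmultiples s) × (AddSubgroup.zmultiples s')) :=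
      AddSubgroup.card_dvd_of_surjective φ.rangeRestrict (AddMonoidHom.rangeRestrict_surjective φ)
    rw [hφr] at h1
    rwa [Nat.card_prod, Nat.card_zmultiples, Nat.card_zmultiples] at h1
  have hHodd : ¬ (2 ∣ Nat.card H) := fun h => hodd (h.trans hdvd)
  have hs₀H : s₀ ∉ H := by
    intro hmem
    have hle : AddSubgroup.zmultiples s₀ ≤ H := by
      rintro x hx
      obtain ⟨k, hk⟩ := hx
      exact hk ▸ zsmul_mem hmem k
    have hdd := AddSubgroup.card_dvd_of_le hle
    rw [Nat.card_zmultiples, h0] at hdd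
    exact hHodd hdd
  have htop : H ⊔ AddSubgroup.zmultiples s₀ = ⊤ := by
    rw [eq_top_iff, ← hgen]
    apply (AddSubgroup.closure_le _).mpr
    intro a ha
    simp only [Set.mem_insert_iff, Set.mem_singleton_iff] at ha
    rcases ha with rfl | rfl | rfl | rfl | rfl
    · exact AddSubgroup.mem_sup_left hsH
    · exact AddSubgroup.mem_sup_left (neg_mem hsH)
    · exact AddSubgroup.mem_sup_left hs'H
    · exact AddSubgroup.mem_sup_left (neg_mem hs'H)
    · exact AddSubgroup.mem_sup_right (AddSubgroup.mem_zmultiples a)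
  have hcoset : ∀ g : G, g ∈ H ∨ g - s₀ ∈ H := by
    intro g
    have hg : g ∈ H ⊔ AddSubgroup.zmultiples s₀ := htop ▸ AddSubgroup.mem_top g
    obtain ⟨y, hy, z, hz, hyz⟩ := AddSubgroup.mem_sup.mp hg
    obtain ⟨k, hk⟩ := hz
    rcases Int.even_or_odd k with ⟨m, hm⟩ | ⟨m, hm⟩
    · left
      have hz0 : z = 0 := by
        rw [← hk, hm]
        show (m + m) • s₀ = 0
        rw [add_zsmul, ← smul_add, h2s₀, smul_zero]
      rw [← hyz, hz0, add_zero]; exact hy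
    · right
      have hzs : z = s₀ := by
        rw [← hk, hm]
        show (2 * m + 1) • s₀ = s₀
        rw [add_zsmul, mul_comm, mul_zsmul, two_zsmul, h2s₀, smul_zero, zero_add, one_zsmul]
      have hgy : g - s₀ = y := by rw [← hyz, hzs]; abel
      rw [hgy]; exact hy
  have e1 := count_lemma s s' s₀ H hsH hs'H hs₀H hcoset h2s₀ hs₀0 hs0 hs'0 h2s h2s' hss' hsns'
    D hD
  set D' : Set G := (fun x => x + s₀) ⁻¹' D with hD'def
  have hD' := code_translate hD s₀
  have e2 := count_lemma s s' s₀ H hsH hs'H hs₀H hcoset h2s₀ hs₀0 hs0 hs'0 h2s h2s' hss' hsns'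
    D' hD'
  have hyyk : ∀ y : G, y + s₀ + s₀ = y := fun y => by rw [add_assoc, h2s₀, add_zero]
  have hpm : ∀ y : G, y + s₀ = y - s₀ := fun y => by rw [sub_eq_add_neg, hnegs₀]
  have himg1 : (fun x => x + s₀) '' (D' ∩ (H : Set G)) = D \ (H : Set G) := by
    ext y
    simp only [Set.mem_image, Set.mem_inter_iff, Set.mem_preimage, Set.mem_diff,
      SetLike.mem_coe, hD'def]
    constructor
    · rintro ⟨x, ⟨hxD, hxH⟩, rfl⟩
      refine ⟨hxD, fun hmem => hs₀H ?_⟩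
      have hsx : s₀ = x + s₀ - x := by abel
      rw [hsx]; exact sub_mem hmem hxH
    · rintro ⟨hyD, hyH⟩
      refine ⟨y + s₀, ⟨?_, ?_⟩, hyyk y⟩
      · rw [hyyk y]; exact hyD
      · rw [hpm y]; exact (hcoset y).resolve_left hyH
  have himg2 : (fun x => x + s₀) '' (D' \ (H : Set G)) = D ∩ (H : Set G) := by
    ext y
    simp only [Set.mem_image, Set.mem_diff, Set.mem_preimage, Set.mem_inter_iff,
      SetLike.mem_coe, hD'def]
    constructor
    · rintro ⟨x, ⟨hxD, hxH⟩, rfl⟩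
      refine ⟨hxD, ?_⟩
      rw [hpm x]; exact (hcoset x).resolve_left hxH
    · rintro ⟨hyD, hyH⟩
      refine ⟨y + s₀, ⟨?_, fun hmem => hs₀H ?_⟩, hyyk y⟩
      · rw [hyyk y]; exact hyD
      · have hsx : s₀ = y + s₀ - y := by abel
        rw [hsx]; exact sub_mem hmem hyH
  have ha : (D' ∩ (H : Set G)).ncard = (D \ (H : Set G)).ncard := by
    rw [← himg1, Set.ncard_image_of_injective _ (add_left_injective s₀)]
  have hb : (D' \ (H : Set G)).ncard = (D ∩ (H : Set G)).ncard := by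
    rw [← himg2, Set.ncard_image_of_injective _ (add_left_injective s₀)]
  rw [ha, hb] at e2
  apply hHodd
  have hcardH : Nat.card H = (H : Set G).ncard := by rw [← Nat.card_coe_set_eq]; rfl
  rw [hcardH]
  omega
end

section
/- Let Cay(G,S) be a connected quintic Cayley graph on a finite abelian group with S = {s, -s, s', -s', s₀}, s₀ an involution, and o(s), o(s') > 2. If D is a perfect code containing the identity 0, then for every integer l, either l·s + l·s' + l·s₀ ∈ D or -l·s + l·s' + l·s₀ ∈ D. -/
section Aux

variable {G : Type*} [AddCommGroup G]

/-- Auxiliary: membership in the connection set together with zero. -/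
abbrev memT (s s' s₀ t : G) : Prop :=
  t = s ∨ t = -s ∨ t = s' ∨ t = -s' ∨ t = s₀ ∨ t = 0

lemma mtS {s s' s₀ : G} : memT s s' s₀ s := Or.inl rfl
lemma mtNS {s s' s₀ : G} : memT s s' s₀ (-s) := Or.inr (Or.inl rfl)
lemma mtS' {s s' s₀ : G} : memT s s' s₀ s' := Or.inr (Or.inr (Or.inl rfl))
lemma mtNS' {s s' s₀ : G} : memT s s' s₀ (-s') := Or.inr (Or.inr (Or.inr (Or.inl rfl)))
lemma mtS0 {s s' s₀ : G} : memT s s' s₀ s₀ := Or.inr (Or.inr (Or.inr (Or.inr (Or.inl rfl))))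
lemma mtZ {s s' s₀ : G} : memT s s' s₀ 0 := Or.inr (Or.inr (Or.inr (Or.inr (Or.inr rfl))))

/-- Bundle of hypotheses used throughout. -/
structure Good (s s' s₀ : G) (D : Set G) : Prop where
  h2 : s₀ + s₀ = 0
  n0 : s₀ ≠ 0
  ns : s ≠ 0
  ns' : s' ≠ 0
  n2s : s + s ≠ 0
  n2s' : s' + s' ≠ 0
  nss' : s + s' ≠ 0
  nsx : s + s₀ ≠ 0
  ns'x : s' + s₀ ≠ 0
  hD : IsPerfectCode (cayley G ({s, -s, s', -s', s₀} : Set G)) D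
  hc0 : (0 : G) ∈ D

variable {s s' s₀ : G} {D : Set G}

lemma memT_mem {t : G} (h : memT s s' s₀ t) (h0 : t ≠ 0) :
    t ∈ ({s, -s, s', -s', s₀} : Set G) := by
  rcases h with ht | ht | ht | ht | ht | ht
  · rw [ht]; simp
  · rw [ht]; simp
  · rw [ht]; simp
  · rw [ht]; simp
  · rw [ht]; simp
  · exact absurd ht h0

lemma cover_exists (hg : Good s s' s₀ D) (v : G) :
    ∃ d ∈ D, ∃ t, memT s s' s₀ t ∧ d = v + t := by
  obtain ⟨c, ⟨hcD, hc⟩, -⟩ := hg.hD v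
  refine ⟨c, hcD, ?_⟩
  rcases hc with rfl | hadj
  · exact ⟨0, mtZ, by rw [add_zero]⟩
  · obtain ⟨hne, hmem⟩ := hadj
    have habel : c = v + (c - v) := by abel
    rcases hmem with h | h
    · refine ⟨c - v, ?_, habel⟩
      simp only [Set.mem_insert_iff, Set.mem_singleton_iff] at h
      unfold memT; tauto
    · refine ⟨c - v, ?_, habel⟩
      have h' : c - v = -(v - c) := by abel
      simp only [Set.mem_insert_iff, Set.mem_singleton_iff] at h
      rcases h with h | h | h | h | h
      · exact Or.inr (Or.inl (by rw [h', h]))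
      · exact Or.inl (by rw [h', h, neg_neg])
      · exact Or.inr (Or.inr (Or.inr (Or.inl (by rw [h', h]))))
      · exact Or.inr (Or.inr (Or.inl (by rw [h', h, neg_neg])))
      · exact Or.inr (Or.inr (Or.inr (Or.inr (Or.inl
          (by rw [h', h]; exact neg_eq_of_add_eq_zero_left hg.h2)))))

lemma cover_unique (hg : Good s s' s₀ D) {c d t1 t2 : G} (hc : c ∈ D) (hd : d ∈ D)
    (h1 : memT s s' s₀ t1) (h2 : memT s s' s₀ t2) (hE : d = c + t1 + t2) : d = c := by
  obtain ⟨u, -, huniq⟩ := hg.hD (c + t1)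
  have e1 : c = u := by
    apply huniq
    refine ⟨hc, ?_⟩
    by_cases h0 : t1 = 0
    · left; rw [h0, add_zero]
    · right
      refine ⟨?_, Or.inr ?_⟩
      · intro hh; exact h0 (add_eq_left.mp hh)
      · show (c + t1) - c ∈ _
        rw [add_sub_cancel_left]; exact memT_mem h1 h0
  have e2 : d = u := by
    apply huniq
    refine ⟨hd, ?_⟩
    by_cases h0 : t2 = 0
    · left; rw [hE, h0, add_zero]
    · right
      refine ⟨?_, Or.inl ?_⟩
      · intro hh
        rw [hh] at hE
        exact h0 (left_eq_add.mp hE)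
      · show d - (c + t1) ∈ _
        rw [hE, add_sub_cancel_left]; exact memT_mem h2 h0
  exact e2.trans e1.symm

lemma keyzero (hg : Good s s' s₀ D) {c d t1 t2 : G} (hc : c ∈ D) (hd : d ∈ D)
    (h1 : memT s s' s₀ t1) (h2 : memT s s' s₀ t2) (hE : d = c + t1 + t2) :
    t1 + t2 = 0 := by
  have h := cover_unique hg hc hd h1 h2 hE
  rw [h] at hE
  have h' : c + (t1 + t2) = c := by rw [← add_assoc]; exact hE.symm
  exact add_eq_left.mp h'

/-- The trichotomy: from `c ∈ D`, the cover of `c + (s+s'+s₀)` is one of three elements. -/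
lemma tri (hg : Good s s' s₀ D) {c : G} (hc : c ∈ D) :
    c + (s + s' + s₀) ∈ D ∨ c + (s + s + s' + s₀) ∈ D ∨ c + (s + s' + s' + s₀) ∈ D := by
  obtain ⟨d, hd, t, ht, hdt⟩ := cover_exists hg (c + (s + s' + s₀))
  rcases ht with ht | ht | ht | ht | ht | ht <;> rw [ht] at hdt
  · right; left
    rw [show c + (s + s + s' + s₀) = d from by rw [hdt]; abel]; exact hd
  · exfalso
    exact hg.ns'x (keyzero hg hc hd mtS' mtS0 (by rw [hdt]; abel))
  · right; right
    rw [show c + (s + s' + s' + s₀) = d from by rw [hdt]; abel]; exact hd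
  · exfalso
    exact hg.nsx (keyzero hg hc hd mtS mtS0 (by rw [hdt]; abel))
  · exfalso
    refine hg.nss' (keyzero hg hc hd mtS mtS' ?_)
    rw [hdt, show c + (s + s' + s₀) + s₀ = c + s + s' + (s₀ + s₀) from by abel, hg.h2, add_zero]
  · left
    rw [show c + (s + s' + s₀) = d from by rw [hdt, add_zero]]; exact hd

lemma bad3a (hg : Good s s' s₀ D) {c : G} (hc : c ∈ D)
    (hc1 : c + (s + s + s' + s₀) ∈ D) : c + (s - s' + s₀) ∈ D := by
  obtain ⟨d, hd, t, ht, hdt⟩ := cover_exists hg (c + (s + s₀))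
  rcases ht with ht | ht | ht | ht | ht | ht <;> rw [ht] at hdt
  · exfalso
    have h := keyzero hg hc1 hd mtNS' mtZ (by rw [hdt]; abel)
    rw [add_zero, neg_eq_zero] at h; exact hg.ns' h
  · exfalso
    have h := keyzero hg hc hd mtS0 mtZ (by rw [hdt]; abel)
    rw [add_zero] at h; exact hg.n0 h
  · exfalso
    have h := keyzero hg hc1 hd mtNS mtZ (by rw [hdt]; abel)
    rw [add_zero, neg_eq_zero] at h; exact hg.ns h
  · rw [show c + (s - s' + s₀) = d from by rw [hdt]; abel]; exact hd
  · exfalso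
    have h := keyzero hg hc hd mtS mtZ (by
      rw [hdt, show c + (s + s₀) + s₀ = c + s + 0 + (s₀ + s₀) from by abel, hg.h2, add_zero])
    rw [add_zero] at h; exact hg.ns h
  · exfalso
    exact hg.nsx (keyzero hg hc hd mtS mtS0 (by rw [hdt]; abel))

lemma bad3c3 (hg : Good s s' s₀ D) {c : G} (hc : c ∈ D)
    (hc1 : c + (s + s + s' + s₀) ∈ D) : c + (s + s' + s') ∈ D := by
  obtain ⟨d, hd, t, ht, hdt⟩ := cover_exists hg (c + (s + s'))
  rcases ht with ht | ht | ht | ht | ht | ht <;> rw [ht] at hdt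
  · exfalso
    have h := keyzero hg hc1 hd mtS0 mtZ (by
      rw [hdt, show c + (s + s') + s = c + (s + s + s' + s₀) + s₀ + 0 - (s₀ + s₀) from by abel,
        hg.h2, sub_zero])
    rw [add_zero] at h; exact hg.n0 h
  · exfalso
    have h := keyzero hg hc hd mtS' mtZ (by rw [hdt]; abel)
    rw [add_zero] at h; exact hg.ns' h
  · rw [show c + (s + s' + s') = d from by rw [hdt]; abel]; exact hd
  · exfalso
    have h := keyzero hg hc hd mtS mtZ (by rw [hdt]; abel)
    rw [add_zero] at h; exact hg.ns h
  · exfalso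
    have h := keyzero hg hc1 hd mtNS mtZ (by rw [hdt]; abel)
    rw [add_zero, neg_eq_zero] at h; exact hg.ns h
  · exfalso
    exact hg.nss' (keyzero hg hc hd mtS mtS' (by rw [hdt]; abel))

lemma bad3b (hg : Good s s' s₀ D) {c : G} (hc : c ∈ D)
    (hc1 : c + (s + s + s' + s₀) ∈ D) : c + (-s + s' + s₀) ∈ D := by
  have hc3 : c + (s + s' + s') ∈ D := bad3c3 hg hc hc1
  obtain ⟨d, hd, t, ht, hdt⟩ := cover_exists hg (c + (s' + s₀))
  rcases ht with ht | ht | ht | ht | ht | ht <;> rw [ht] at hdt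
  · exfalso
    have h := keyzero hg hc1 hd mtNS mtZ (by rw [hdt]; abel)
    rw [add_zero, neg_eq_zero] at h; exact hg.ns h
  · rw [show c + (-s + s' + s₀) = d from by rw [hdt]; abel]; exact hd
  · exfalso
    have h := keyzero hg hc3 hd mtS0 mtNS (by rw [hdt]; abel)
    have h' : s₀ = s := add_neg_eq_zero.mp h
    exact hg.nsx (by rw [← h']; exact hg.h2)
  · exfalso
    have h := keyzero hg hc hd mtS0 mtZ (by rw [hdt]; abel)
    rw [add_zero] at h; exact hg.n0 h
  · exfalso
    have h := keyzero hg hc hd mtS' mtZ (by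
      rw [hdt, show c + (s' + s₀) + s₀ = c + s' + 0 + (s₀ + s₀) from by abel, hg.h2, add_zero])
    rw [add_zero] at h; exact hg.ns' h
  · exfalso
    exact hg.ns'x (keyzero hg hc hd mtS' mtS0 (by rw [hdt]; abel))

lemma swapGood (hg : Good s s' s₀ D) : Good s' s s₀ D where
  h2 := hg.h2
  n0 := hg.n0
  ns := hg.ns'
  ns' := hg.ns
  n2s := hg.n2s'
  n2s' := hg.n2s
  nss' := fun h => hg.nss' (by rwa [add_comm] at h)
  nsx := hg.ns'x
  ns'x := hg.nsx
  hD := by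
    rw [show ({s', -s', s, -s, s₀} : Set G) = {s, -s, s', -s', s₀} from by
      ext x; simp only [Set.mem_insert_iff, Set.mem_singleton_iff]; tauto]
    exact hg.hD
  hc0 := hg.hc0

lemma negGood (hg : Good s s' s₀ D) : Good (-s) (-s') s₀ D where
  h2 := hg.h2
  n0 := hg.n0
  ns := neg_ne_zero.mpr hg.ns
  ns' := neg_ne_zero.mpr hg.ns'
  n2s := fun h => hg.n2s (by rwa [← neg_add, neg_eq_zero] at h)
  n2s' := fun h => hg.n2s' (by rwa [← neg_add, neg_eq_zero] at h)
  nss' := fun h => hg.nss' (by rwa [← neg_add, neg_eq_zero] at h)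
  nsx := by
    intro h
    rw [add_comm] at h
    have h' : s₀ = s := add_neg_eq_zero.mp h
    exact hg.n2s (by rw [← h']; exact hg.h2)
  ns'x := by
    intro h
    rw [add_comm] at h
    have h' : s₀ = s' := add_neg_eq_zero.mp h
    exact hg.n2s' (by rw [← h']; exact hg.h2)
  hD := by
    rw [show ({-s, -(-s), -s', -(-s'), s₀} : Set G) = {s, -s, s', -s', s₀} from by
      ext x; simp only [Set.mem_insert_iff, Set.mem_singleton_iff, neg_neg]; tauto]
    exact hg.hD
  hc0 := hg.hc0

lemma badTo (hg : Good s s' s₀ D) {c : G} (hc : c ∈ D)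
    (hbad : c + (s + s + s' + s₀) ∈ D ∨ c + (s + s' + s' + s₀) ∈ D) :
    c + (-s + s' + s₀) ∈ D ∧ c + (s - s' + s₀) ∈ D := by
  rcases hbad with h | h
  · exact ⟨bad3b hg hc h, bad3a hg hc h⟩
  · have hg' : Good s' s s₀ D := swapGood hg
    have h' : c + (s' + s' + s + s₀) ∈ D := by
      rw [show c + (s' + s' + s + s₀) = c + (s + s' + s' + s₀) from by abel]; exact h
    refine ⟨?_, ?_⟩
    · rw [show c + (-s + s' + s₀) = c + (s' - s + s₀) from by abel]
      exact bad3a hg' hc h'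
    · rw [show c + (s - s' + s₀) = c + (-s' + s + s₀) from by abel]
      exact bad3b hg' hc h'

lemma badNext (hg : Good s s' s₀ D) {c : G} (hc : c ∈ D)
    (hbad : c + (s + s + s' + s₀) ∈ D ∨ c + (s + s' + s' + s₀) ∈ D) :
    (c + (-s + s' + s₀)) + (s + s + s' + s₀) ∈ D ∨
      (c + (-s + s' + s₀)) + (s + s' + s' + s₀) ∈ D := by
  have hz : c + (-s + s' + s₀) ∈ D := (badTo hg hc hbad).1
  rcases tri hg hz with h | h | h
  · exfalso
    refine hg.n2s' (keyzero hg hc h mtS' mtS' ?_)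
    rw [show (c + (-s + s' + s₀)) + (s + s' + s₀) = c + s' + s' + (s₀ + s₀) from by abel,
      hg.h2, add_zero]
  · left; exact h
  · right; exact h

lemma notPrev (hg : Good s s' s₀ D) {c : G} (hc : c ∈ D)
    (hbad : c + (s + s + s' + s₀) ∈ D ∨ c + (s + s' + s' + s₀) ∈ D)
    (hprev : c - (s + s' + s₀) ∈ D) : False := by
  have hy : c + (s - s' + s₀) ∈ D := (badTo hg hc hbad).2
  refine hg.n2s (keyzero hg hprev hy mtS mtS ?_)
  have e : (c - (s + s' + s₀)) + s + s = c + (s - s' + s₀) - (s₀ + s₀) := by abel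
  rw [hg.h2, sub_zero] at e
  exact e.symm

lemma lineB (hg : Good s s' s₀ D)
    (hbad0 : (s + s + s' + s₀) ∈ D ∨ (s + s' + s' + s₀) ∈ D) :
    ∀ n : ℕ, n • (-s + s' + s₀) ∈ D := by
  have key : ∀ n : ℕ, n • (-s + s' + s₀) ∈ D ∧
      (n • (-s + s' + s₀) + (s + s + s' + s₀) ∈ D ∨
        n • (-s + s' + s₀) + (s + s' + s' + s₀) ∈ D) := by
    intro n
    induction n with
    | zero =>
      refine ⟨by simpa [zero_nsmul] using hg.hc0, ?_⟩
      simpa [zero_nsmul] using hbad0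
    | succ n ih =>
      obtain ⟨hn, hbadn⟩ := ih
      have e : (n + 1) • (-s + s' + s₀) = n • (-s + s' + s₀) + (-s + s' + s₀) := by
        rw [add_nsmul, one_nsmul]
      refine ⟨?_, ?_⟩
      · rw [e]; exact (badTo hg hn hbadn).1
      · rw [e]; exact badNext hg hn hbadn
  exact fun n => (key n).1

lemma mainNat (hg : Good s s' s₀ D) :
    ∀ n : ℕ, n • (s + s' + s₀) ∈ D ∨ n • (-s + s' + s₀) ∈ D := by
  have key : ∀ n : ℕ,
      (∀ k, k ≤ n → k • (s + s' + s₀) ∈ D) ∨ (∀ k : ℕ, k • (-s + s' + s₀) ∈ D) := by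
    intro n
    induction n with
    | zero =>
      left; intro k hk
      rw [Nat.le_zero.mp hk]; simpa [zero_nsmul] using hg.hc0
    | succ n ih =>
      rcases ih with hA | hB
      · have hn : n • (s + s' + s₀) ∈ D := hA n le_rfl
        rcases tri hg hn with h | h | h
        · left
          intro k hk
          rcases eq_or_lt_of_le hk with rfl | hlt
          · rw [add_nsmul, one_nsmul]; exact h
          · exact hA k (Nat.lt_succ_iff.mp hlt)
        · cases n with
          | zero =>
            right
            exact lineB hg (Or.inl (by simpa [zero_nsmul] using h))
          | succ m =>
            exfalso
            apply notPrev hg hn (Or.inl h)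
            rw [show ((m : ℕ) + 1) • (s + s' + s₀) - (s + s' + s₀) = m • (s + s' + s₀) from by
              rw [add_nsmul, one_nsmul]; abel]
            exact hA m (Nat.le_succ m)
        · cases n with
          | zero =>
            right
            exact lineB hg (Or.inr (by simpa [zero_nsmul] using h))
          | succ m =>
            exfalso
            apply notPrev hg hn (Or.inr h)
            rw [show ((m : ℕ) + 1) • (s + s' + s₀) - (s + s' + s₀) = m • (s + s' + s₀) from by
              rw [add_nsmul, one_nsmul]; abel]
            exact hA m (Nat.le_succ m)
      · right; exact hB
  intro n
  rcases key n with h | h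
  · left; exact h n le_rfl
  · right; exact h n

end Aux

theorem stmt2 (G : Type*) [AddCommGroup G] [Fintype G] (s s' s₀ : G)
    (h5 : ({s, -s, s', -s', s₀} : Set G).ncard = 5)
    (h0 : addOrderOf s₀ = 2) (hs : 2 < addOrderOf s) (hs' : 2 < addOrderOf s')
    (hgen : AddSubgroup.closure ({s, -s, s', -s', s₀} : Set G) = ⊤)
    (D : Set G)
    (hD : IsPerfectCode (cayley G ({s, -s, s', -s', s₀} : Set G)) D)
    (hD0 : (0 : G) ∈ D) :
    ∀ l : ℤ, (l • s + l • s' + l • s₀ ∈ D) ∨ (-(l • s) + l • s' + l • s₀ ∈ D) := by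
  have h2 : s₀ + s₀ = 0 := by
    have h := addOrderOf_nsmul_eq_zero s₀
    rwa [h0, two_nsmul] at h
  have n0 : s₀ ≠ 0 := by
    intro h; rw [h, addOrderOf_zero] at h0; omega
  have ns : s ≠ 0 := by
    intro h; rw [h, addOrderOf_zero] at hs; omega
  have ns' : s' ≠ 0 := by
    intro h; rw [h, addOrderOf_zero] at hs'; omega
  have n2s : s + s ≠ 0 := by
    intro h
    have h' : (2 : ℕ) • s = 0 := by rw [two_nsmul]; exact h
    have hle := Nat.le_of_dvd (by norm_num) (addOrderOf_dvd_of_nsmul_eq_zero h')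
    omega
  have n2s' : s' + s' ≠ 0 := by
    intro h
    have h' : (2 : ℕ) • s' = 0 := by rw [two_nsmul]; exact h
    have hle := Nat.le_of_dvd (by norm_num) (addOrderOf_dvd_of_nsmul_eq_zero h')
    omega
  have nsx : s + s₀ ≠ 0 := by
    intro h
    have h1 : s = s₀ := by
      rw [eq_neg_of_add_eq_zero_left h, neg_eq_of_add_eq_zero_left h2]
    rw [h1, h0] at hs; omega
  have ns'x : s' + s₀ ≠ 0 := by
    intro h
    have h1 : s' = s₀ := by
      rw [eq_neg_of_add_eq_zero_left h, neg_eq_of_add_eq_zero_left h2]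
    rw [h1, h0] at hs'; omega
  have nss' : s + s' ≠ 0 := by
    intro h
    have h4 : s' = -s := eq_neg_of_add_eq_zero_right h
    have hsub : ({s, -s, s', -s', s₀} : Set G) ⊆ {s, -s, s₀} := by
      intro x hx
      simp only [Set.mem_insert_iff, Set.mem_singleton_iff] at hx ⊢
      rcases hx with rfl | rfl | rfl | rfl | rfl
      · tauto
      · tauto
      · rw [h4]; tauto
      · rw [h4, neg_neg]; tauto
      · tauto
    have hle := Set.ncard_le_ncard hsub (Set.toFinite _)
    rw [h5] at hle
    have hb : ({s, -s, s₀} : Set G).ncard ≤ 3 := by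
      have i1 := Set.ncard_insert_le s ({-s, s₀} : Set G)
      have i2 := Set.ncard_insert_le (-s) ({s₀} : Set G)
      have i3 : ({s₀} : Set G).ncard = 1 := Set.ncard_singleton _
      omega
    omega
  have hg : Good s s' s₀ D := ⟨h2, n0, ns, ns', n2s, n2s', nss', nsx, ns'x, hD, hD0⟩
  intro l
  obtain ⟨n, rfl | rfl⟩ := l.eq_nat_or_neg
  · rcases mainNat hg n with h | h
    · left
      have e : ((n : ℤ)) • s + ((n : ℤ)) • s' + ((n : ℤ)) • s₀ = n • (s + s' + s₀) := by
        simp only [natCast_zsmul, smul_add]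
      rw [e]; exact h
    · right
      have e : -(((n : ℤ)) • s) + ((n : ℤ)) • s' + ((n : ℤ)) • s₀ = n • (-s + s' + s₀) := by
        simp only [natCast_zsmul, smul_add, smul_neg]
      rw [e]; exact h
  · have hg' : Good (-s) (-s') s₀ D := negGood hg
    have hns₀ : -(n • s₀) = n • s₀ := by
      refine neg_eq_of_add_eq_zero_left ?_
      rw [← smul_add, h2, smul_zero]
    rcases mainNat hg' n with h | h
    · left
      have e : (-(n : ℤ)) • s + (-(n : ℤ)) • s' + (-(n : ℤ)) • s₀ = n • (-s + -s' + s₀) := by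
        simp only [neg_zsmul, natCast_zsmul, smul_add, smul_neg, hns₀]
      rw [e]; exact h
    · right
      have e : -((-(n : ℤ)) • s) + (-(n : ℤ)) • s' + (-(n : ℤ)) • s₀ =
          n • (-(-s) + -s' + s₀) := by
        simp only [neg_zsmul, natCast_zsmul, smul_add, smul_neg, neg_neg, hns₀]
      rw [e]; exact h
end

section
/- Let Cay(G,S) be a connected quintic Cayley graph on a finite abelian group with S = {s, -s, s', -s', s₀}, s₀ an involution, o(s), o(s') > 2, and let D be a perfect code. If g ∈ D, then none of g + s₀, g - s, g - 2s, g - s + s₀, g - 2s + s₀ lies in D, and g - 3s ∈ D or g - 3s + s₀ ∈ D. -/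
section PCHelpers

variable {G : Type*} [AddCommGroup G]

private lemma dom_unique {V : Type*} {Γ : SimpleGraph V} {D : Set V}
    (hD : IsPerfectCode Γ D) {v c₁ c₂ : V}
    (h₁ : c₁ ∈ D ∧ (v = c₁ ∨ Γ.Adj v c₁)) (h₂ : c₂ ∈ D ∧ (v = c₂ ∨ Γ.Adj v c₂)) :
    c₁ = c₂ := by
  obtain ⟨c, -, hu⟩ := hD v
  rw [hu c₁ h₁, hu c₂ h₂]

private lemma adj_of_eq (S : Set G) {v w t : G} (htS : t ∈ S) (ht0 : t ≠ 0)
    (h : w = v + t) : (cayley G S).Adj v w := by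
  show v ≠ w ∧ (w - v ∈ S ∨ v - w ∈ S)
  constructor
  · intro hv
    rw [hv] at h
    exact ht0 (left_eq_add.mp h)
  · left
    rw [h]
    simpa using htS

private lemma eq_of_word {a b : G} (x y : G) (h : a = b) (hxy : a - b = x - y) : x = y := by
  have hxy0 : x - y = 0 := by rw [← hxy, h, sub_self]
  exact sub_eq_zero.mp hxy0

private lemma ball_cases (s s' s₀ : G) (hs0 : s₀ + s₀ = 0) {v c : G}
    (h : v = c ∨ (cayley G ({s, -s, s', -s', s₀} : Set G)).Adj v c) :
    c = v ∨ c = v + s ∨ c = v - s ∨ c = v + s' ∨ c = v - s' ∨ c = v + s₀ := by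
  rcases h with h | hadj
  · exact Or.inl h.symm
  have h2 : v ≠ c ∧ (c - v ∈ ({s, -s, s', -s', s₀} : Set G) ∨
      v - c ∈ ({s, -s, s', -s', s₀} : Set G)) := hadj
  rcases h2.2 with h | h
  · simp only [Set.mem_insert_iff, Set.mem_singleton_iff] at h
    rcases h with h | h | h | h | h
    · refine Or.inr (Or.inl ?_); rw [eq_add_of_sub_eq h]; abel
    · refine Or.inr (Or.inr (Or.inl ?_)); rw [eq_add_of_sub_eq h]; abel
    · refine Or.inr (Or.inr (Or.inr (Or.inl ?_))); rw [eq_add_of_sub_eq h]; abel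
    · refine Or.inr (Or.inr (Or.inr (Or.inr (Or.inl ?_)))); rw [eq_add_of_sub_eq h]; abel
    · refine Or.inr (Or.inr (Or.inr (Or.inr (Or.inr ?_)))); rw [eq_add_of_sub_eq h]; abel
  · simp only [Set.mem_insert_iff, Set.mem_singleton_iff] at h
    rcases h with h | h | h | h | h
    · refine Or.inr (Or.inr (Or.inl ?_)); rw [sub_eq_iff_eq_add.mp h]; abel
    · refine Or.inr (Or.inl ?_); rw [sub_eq_iff_eq_add.mp h]; abel
    · refine Or.inr (Or.inr (Or.inr (Or.inr (Or.inl ?_)))); rw [sub_eq_iff_eq_add.mp h]; abel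
    · refine Or.inr (Or.inr (Or.inr (Or.inl ?_))); rw [sub_eq_iff_eq_add.mp h]; abel
    · refine Or.inr (Or.inr (Or.inr (Or.inr (Or.inr ?_))))
      rw [sub_eq_iff_eq_add.mp h]
      have h3 : s₀ + c + s₀ = c + (s₀ + s₀) := by abel
      rw [h3, hs0, add_zero]

end PCHelpers

section PCMain

variable {G : Type*} [AddCommGroup G]

private lemma chainA (s s' s₀ : G)
    (hs0 : s₀ + s₀ = 0) (hs0ne : s₀ ≠ 0) (hsne : s ≠ 0)
    (hs'ne : s' ≠ 0) (hss0 : s ≠ s₀) (hs's0 : s' ≠ s₀)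
    (hss' : s = s' → False) (hss'' : s' = -s → False)
    (D : Set G) (hD : IsPerfectCode (cayley G ({s, -s, s', -s', s₀} : Set G)) D)
    (g : G) (hg : g ∈ D) (hx : g - s - s + s₀ ∈ D) : False := by
  have hms : s ∈ ({s, -s, s', -s', s₀} : Set G) := by simp
  have hmns : -s ∈ ({s, -s, s', -s', s₀} : Set G) := by simp
  have hms' : s' ∈ ({s, -s, s', -s', s₀} : Set G) := by simp
  have hms0 : s₀ ∈ ({s, -s, s', -s', s₀} : Set G) := by simp
  have hnsne : (-s : G) ≠ 0 := neg_ne_zero.mpr hsne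
  have hnegs0 : -s₀ = s₀ := neg_eq_of_add_eq_zero_left hs0
  have E1 : g - s + s' ∉ D := by
    intro h
    have e : g - s + s' = g := dom_unique hD
      ⟨h, Or.inr (adj_of_eq _ hms' hs'ne (by abel))⟩
      ⟨hg, Or.inr (adj_of_eq _ hms hsne (by abel : g = (g - s) + s))⟩
    exact hss' (eq_of_word s' s e (by abel)).symm
  have E2 : g + s' ∉ D := by
    intro h
    have e : g + s' = g := dom_unique hD
      ⟨h, Or.inr (adj_of_eq _ hms' hs'ne (by abel))⟩ ⟨hg, Or.inl rfl⟩
    exact hs'ne (eq_of_word s' 0 e (by abel))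
  have E3 : g - s - s + s' ∉ D := by
    intro h
    have e : g - s - s + s' = g - s - s + s₀ := dom_unique hD
      ⟨h, Or.inr (adj_of_eq _ hms' hs'ne (by abel : g - s - s + s' = (g - s - s) + s'))⟩
      ⟨hx, Or.inr (adj_of_eq _ hms0 hs0ne (by abel : g - s - s + s₀ = (g - s - s) + s₀))⟩
    exact hs's0 (eq_of_word s' s₀ e (by abel))
  have E4 : g - s ∉ D := by
    intro h
    have e : g - s = g := dom_unique hD
      ⟨h, Or.inl rfl⟩ ⟨hg, Or.inr (adj_of_eq _ hms hsne (by abel : g = (g - s) + s))⟩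
    exact hsne ((eq_of_word 0 s e (by abel)).symm)
  have E5 : g - s + s' + s₀ ∉ D := by
    intro h
    have e : g - s + s' + s₀ = g - s - s + s₀ := dom_unique hD
      ⟨h, Or.inr (adj_of_eq _ hms' hs'ne (by abel : g - s + s' + s₀ = (g - s + s₀) + s'))⟩
      ⟨hx, Or.inr (adj_of_eq _ hmns hnsne (by abel : g - s - s + s₀ = (g - s + s₀) + -s))⟩
    exact hss'' (eq_of_word s' (-s) e (by abel))
  obtain ⟨c, hc, -⟩ := hD (g - s + s')
  rcases ball_cases s s' s₀ hs0 hc.2 with h | h | h | h | h | h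
  · exact E1 (h ▸ hc.1)
  · have e : c = g + s' := by rw [h]; abel
    exact E2 (e ▸ hc.1)
  · have e : c = g - s - s + s' := by rw [h]; abel
    exact E3 (e ▸ hc.1)
  · -- c = (g - s + s') + s' : forced code y
    have hy : g - s + s' + s' ∈ D := h ▸ hc.1
    have E7 : g + s' + s₀ ∉ D := by
      intro h'
      have e : g + s' + s₀ = g := dom_unique hD
        ⟨h', Or.inr (adj_of_eq _ hms' hs'ne (by abel : g + s' + s₀ = (g + s₀) + s'))⟩
        ⟨hg, Or.inr (adj_of_eq _ hms0 hs0ne (by rw [add_assoc, hs0, add_zero]))⟩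
      have e2 : s' = -s₀ := eq_of_word s' (-s₀) e (by abel)
      rw [hnegs0] at e2
      exact hs's0 e2
    have E8 : g - s - s + s₀ + s' ∉ D := by
      intro h'
      have e : g - s - s + s₀ + s' = g - s - s + s₀ := dom_unique hD
        ⟨h', Or.inr (adj_of_eq _ hms' hs'ne (by abel))⟩ ⟨hx, Or.inl rfl⟩
      exact hs'ne (eq_of_word s' 0 e (by abel))
    have E9 : g - s + s₀ ∉ D := by
      intro h'
      have e : g - s + s₀ = g - s - s + s₀ := dom_unique hD
        ⟨h', Or.inl rfl⟩
        ⟨hx, Or.inr (adj_of_eq _ hmns hnsne (by abel : g - s - s + s₀ = (g - s + s₀) + -s))⟩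
      exact hsne (eq_of_word s 0 e (by abel))
    obtain ⟨c', hc', -⟩ := hD (g - s + s' + s₀)
    rcases ball_cases s s' s₀ hs0 hc'.2 with h' | h' | h' | h' | h' | h'
    · exact E5 (h' ▸ hc'.1)
    · have e : c' = g + s' + s₀ := by rw [h']; abel
      exact E7 (e ▸ hc'.1)
    · have e : c' = g - s - s + s₀ + s' := by rw [h']; abel
      exact E8 (e ▸ hc'.1)
    · -- c' = (g - s + s' + s₀) + s' : y + s₀ in D, contradiction with y
      have hy2 : g - s + s' + s₀ + s' ∈ D := h' ▸ hc'.1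
      have e : g - s + s' + s' = g - s + s' + s₀ + s' := dom_unique hD
        ⟨hy, Or.inl rfl⟩
        ⟨hy2, Or.inr (adj_of_eq _ hms0 hs0ne
          (by abel : g - s + s' + s₀ + s' = (g - s + s' + s') + s₀))⟩
      exact hs0ne ((eq_of_word 0 s₀ e (by abel)).symm)
    · have e : c' = g - s + s₀ := by rw [h']; abel
      exact E9 (e ▸ hc'.1)
    · have e : c' = g - s + s' := by
        rw [h']
        have h3 : g - s + s' + s₀ + s₀ = g - s + s' + (s₀ + s₀) := by abel
        rw [h3, hs0, add_zero]
      exact E1 (e ▸ hc'.1)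
  · have e : c = g - s := by rw [h]; abel
    exact E4 (e ▸ hc.1)
  · exact E5 (h ▸ hc.1)

private lemma chainB (s s' s₀ : G)
    (hs0 : s₀ + s₀ = 0) (hs0ne : s₀ ≠ 0) (hsne : s ≠ 0)
    (hs'ne : s' ≠ 0) (hss0 : s ≠ s₀) (hs's0 : s' ≠ s₀)
    (hss' : s = s' → False) (hss'' : s' = -s → False)
    (D : Set G) (hD : IsPerfectCode (cayley G ({s, -s, s', -s', s₀} : Set G)) D)
    (g : G) (hg : g ∈ D)
    (ha : g - s - s + s' ∈ D) (hb : g - s - s - s' + s₀ ∈ D) : False := by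
  have hms : s ∈ ({s, -s, s', -s', s₀} : Set G) := by simp
  have hmns : -s ∈ ({s, -s, s', -s', s₀} : Set G) := by simp
  have hms' : s' ∈ ({s, -s, s', -s', s₀} : Set G) := by simp
  have hms0 : s₀ ∈ ({s, -s, s', -s', s₀} : Set G) := by simp
  have hnsne : (-s : G) ≠ 0 := neg_ne_zero.mpr hsne
  have hnegs0 : -s₀ = s₀ := neg_eq_of_add_eq_zero_left hs0
  have Fi : g + s₀ ∉ D := by
    intro h
    have e : g + s₀ = g := dom_unique hD
      ⟨h, Or.inr (adj_of_eq _ hms0 hs0ne (by abel))⟩ ⟨hg, Or.inl rfl⟩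
    exact hs0ne (eq_of_word s₀ 0 e (by abel))
  have Fiv : g - s + s₀ ∉ D := by
    intro h
    have e : g - s + s₀ = g := dom_unique hD
      ⟨h, Or.inr (adj_of_eq _ hms0 hs0ne (by abel))⟩
      ⟨hg, Or.inr (adj_of_eq _ hms hsne (by abel : g = (g - s) + s))⟩
    exact hss0 (eq_of_word s₀ s e (by abel)).symm
  have E4 : g - s ∉ D := by
    intro h
    have e : g - s = g := dom_unique hD
      ⟨h, Or.inl rfl⟩ ⟨hg, Or.inr (adj_of_eq _ hms hsne (by abel : g = (g - s) + s))⟩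
    exact hsne ((eq_of_word 0 s e (by abel)).symm)
  have Fv : g - s - s + s₀ ∉ D := fun h =>
    chainA s s' s₀ hs0 hs0ne hsne hs'ne hss0 hs's0 hss' hss'' D hD g hg h
  have E10 : g - s + s' + s₀ ∉ D := by
    intro h
    have e : g - s + s' + s₀ = g - s - s + s' := dom_unique hD
      ⟨h, Or.inr (adj_of_eq _ hms hsne
        (by abel : g - s + s' + s₀ = (g - s - s + s' + s₀) + s))⟩
      ⟨ha, Or.inr (adj_of_eq _ hms0 hs0ne (by
        have h3 : (g - s - s + s' + s₀) + s₀ = g - s - s + s' + (s₀ + s₀) := by abel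
        rw [h3, hs0, add_zero]))⟩
    have e2 : s = -s₀ := eq_of_word s (-s₀) e (by abel)
    rw [hnegs0] at e2
    exact hss0 e2
  have E11 : g - s - s' + s₀ ∉ D := by
    intro h
    have e : g - s - s' + s₀ = g - s - s - s' + s₀ := dom_unique hD
      ⟨h, Or.inl rfl⟩
      ⟨hb, Or.inr (adj_of_eq _ hmns hnsne
        (by abel : g - s - s - s' + s₀ = (g - s - s' + s₀) + -s))⟩
    exact hsne (eq_of_word s 0 e (by abel))
  obtain ⟨c, hc, -⟩ := hD (g - s + s₀)
  rcases ball_cases s s' s₀ hs0 hc.2 with h | h | h | h | h | h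
  · exact Fiv (h ▸ hc.1)
  · have e : c = g + s₀ := by rw [h]; abel
    exact Fi (e ▸ hc.1)
  · have e : c = g - s - s + s₀ := by rw [h]; abel
    exact Fv (e ▸ hc.1)
  · have e : c = g - s + s' + s₀ := by rw [h]; abel
    exact E10 (e ▸ hc.1)
  · have e : c = g - s - s' + s₀ := by rw [h]; abel
    exact E11 (e ▸ hc.1)
  · have e : c = g - s := by
      rw [h]
      have h3 : g - s + s₀ + s₀ = g - s + (s₀ + s₀) := by abel
      rw [h3, hs0, add_zero]
    exact E4 (e ▸ hc.1)

end PCMain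

theorem stmt3 (G : Type*) [AddCommGroup G] [Fintype G] (s s' s₀ : G)
    (h5 : ({s, -s, s', -s', s₀} : Set G).ncard = 5)
    (h0 : addOrderOf s₀ = 2) (hs : 2 < addOrderOf s) (hs' : 2 < addOrderOf s')
    (hgen : AddSubgroup.closure ({s, -s, s', -s', s₀} : Set G) = ⊤)
    (D : Set G)
    (hD : IsPerfectCode (cayley G ({s, -s, s', -s', s₀} : Set G)) D)
    (g : G) (hg : g ∈ D) :
    (g + s₀ ∉ D ∧ g - s ∉ D ∧ g - s - s ∉ D ∧
      g - s + s₀ ∉ D ∧ g - s - s + s₀ ∉ D) ∧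
    (g - s - s - s ∈ D ∨ g - s - s - s + s₀ ∈ D) := by
  -- basic disequalities
  have hs0' : s₀ + s₀ = 0 := by
    have h := addOrderOf_nsmul_eq_zero s₀
    rw [h0, two_nsmul] at h
    exact h
  have hs0ne : s₀ ≠ 0 := by
    intro h; rw [h, addOrderOf_zero] at h0; omega
  have hsne : s ≠ 0 := by
    intro h; rw [h, addOrderOf_zero] at hs; omega
  have hs'ne : s' ≠ 0 := by
    intro h; rw [h, addOrderOf_zero] at hs'; omega
  have hs2 : s + s ≠ 0 := by
    intro h
    have h2 : (2 : ℕ) • s = 0 := by rw [two_nsmul]; exact h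
    have h3 := addOrderOf_dvd_of_nsmul_eq_zero h2
    have h4 := Nat.le_of_dvd (by norm_num) h3
    omega
  have hss0 : s ≠ s₀ := by
    intro h; rw [h, h0] at hs; omega
  have hs's0 : s' ≠ s₀ := by
    intro h; rw [h, h0] at hs'; omega
  have hss' : s = s' → False := by
    intro h
    have hset : ({s, -s, s', -s', s₀} : Set G) = {s, -s, s₀} := by
      rw [← h]
      ext x
      simp only [Set.mem_insert_iff, Set.mem_singleton_iff]
      tauto
    rw [hset] at h5
    have c1 := Set.ncard_insert_le s ({-s, s₀} : Set G)
    have c2 := Set.ncard_insert_le (-s) ({s₀} : Set G)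
    have c3 : ({s₀} : Set G).ncard = 1 := Set.ncard_singleton s₀
    omega
  have hss'' : s' = -s → False := by
    intro h
    have hset : ({s, -s, s', -s', s₀} : Set G) = {s, -s, s₀} := by
      rw [h]
      ext x
      simp only [Set.mem_insert_iff, Set.mem_singleton_iff, neg_neg]
      tauto
    rw [hset] at h5
    have c1 := Set.ncard_insert_le s ({-s, s₀} : Set G)
    have c2 := Set.ncard_insert_le (-s) ({s₀} : Set G)
    have c3 : ({s₀} : Set G).ncard = 1 := Set.ncard_singleton s₀
    omega
  have hnegs0 : -s₀ = s₀ := neg_eq_of_add_eq_zero_left hs0'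
  have hms : s ∈ ({s, -s, s', -s', s₀} : Set G) := by simp
  have hmns : -s ∈ ({s, -s, s', -s', s₀} : Set G) := by simp
  have hms0 : s₀ ∈ ({s, -s, s', -s', s₀} : Set G) := by simp
  have hnsne : (-s : G) ≠ 0 := neg_ne_zero.mpr hsne
  -- part-1 facts
  have Fi : g + s₀ ∉ D := by
    intro h
    have e : g + s₀ = g := dom_unique hD
      ⟨h, Or.inr (adj_of_eq _ hms0 hs0ne (by abel))⟩ ⟨hg, Or.inl rfl⟩
    exact hs0ne (eq_of_word s₀ 0 e (by abel))
  have E4 : g - s ∉ D := by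
    intro h
    have e : g - s = g := dom_unique hD
      ⟨h, Or.inl rfl⟩ ⟨hg, Or.inr (adj_of_eq _ hms hsne (by abel : g = (g - s) + s))⟩
    exact hsne ((eq_of_word 0 s e (by abel)).symm)
  have Fiii : g - s - s ∉ D := by
    intro h
    have e : g - s - s = g := dom_unique hD
      ⟨h, Or.inr (adj_of_eq _ hmns hnsne (by abel : g - s - s = (g - s) + -s))⟩
      ⟨hg, Or.inr (adj_of_eq _ hms hsne (by abel : g = (g - s) + s))⟩
    exact hs2 ((eq_of_word 0 (s + s) e (by abel)).symm)
  have Fiv : g - s + s₀ ∉ D := by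
    intro h
    have e : g - s + s₀ = g := dom_unique hD
      ⟨h, Or.inr (adj_of_eq _ hms0 hs0ne (by abel))⟩
      ⟨hg, Or.inr (adj_of_eq _ hms hsne (by abel : g = (g - s) + s))⟩
    exact hss0 (eq_of_word s₀ s e (by abel)).symm
  have Fv : g - s - s + s₀ ∉ D := fun h =>
    chainA s s' s₀ hs0' hs0ne hsne hs'ne hss0 hs's0 hss' hss'' D hD g hg h
  refine ⟨⟨Fi, E4, Fiii, Fiv, Fv⟩, ?_⟩
  -- helper facts for the s' ↦ -s' instance of chainB
  have hsetneg : ({s, -s, -s', -(-s'), s₀} : Set G) = ({s, -s, s', -s', s₀} : Set G) := by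
    ext x
    simp only [Set.mem_insert_iff, Set.mem_singleton_iff, neg_neg]
    tauto
  have hD' : IsPerfectCode (cayley G ({s, -s, -s', -(-s'), s₀} : Set G)) D := by
    rw [hsetneg]; exact hD
  have hns'ne : (-s' : G) ≠ 0 := neg_ne_zero.mpr hs'ne
  have hns's0 : -s' ≠ s₀ := by
    intro h
    apply hs's0
    have h2 : s' = -s₀ := by rw [← h, neg_neg]
    rw [hnegs0] at h2
    exact h2
  have hssn' : s = -s' → False := fun h => hss'' (by rw [h, neg_neg])
  have hssn'' : -s' = -s → False := fun h => hss' (neg_injective h).symm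
  -- the two dominators
  obtain ⟨c, hc, -⟩ := hD (g - s - s)
  rcases ball_cases s s' s₀ hs0' hc.2 with h | h | h | h | h | h
  · exact absurd (h ▸ hc.1) Fiii
  · have e : c = g - s := by rw [h]; abel
    exact absurd (e ▸ hc.1) E4
  · exact Or.inl (h ▸ hc.1)
  · -- c = g - s - s + s'
    have ha' : g - s - s + s' ∈ D := h ▸ hc.1
    obtain ⟨c', hc', -⟩ := hD (g - s - s + s₀)
    rcases ball_cases s s' s₀ hs0' hc'.2 with h' | h' | h' | h' | h' | h'
    · exact absurd (h' ▸ hc'.1) Fv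
    · have e : c' = g - s + s₀ := by rw [h']; abel
      exact absurd (e ▸ hc'.1) Fiv
    · have e : c' = g - s - s - s + s₀ := by rw [h']; abel
      exact Or.inr (e ▸ hc'.1)
    · -- c' = g - s - s + s₀ + s' : clash with ha'
      exfalso
      have hb' : g - s - s + s₀ + s' ∈ D := h' ▸ hc'.1
      have e : g - s - s + s' = g - s - s + s₀ + s' := dom_unique hD
        ⟨ha', Or.inl rfl⟩
        ⟨hb', Or.inr (adj_of_eq _ hms0 hs0ne
          (by abel : g - s - s + s₀ + s' = (g - s - s + s') + s₀))⟩
      exact hs0ne ((eq_of_word 0 s₀ e (by abel)).symm)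
    · -- c' = g - s - s + s₀ - s' : chainB with s'
      exfalso
      have hb'' : g - s - s - s' + s₀ ∈ D := by
        have e : c' = g - s - s - s' + s₀ := by rw [h']; abel
        exact e ▸ hc'.1
      exact chainB s s' s₀ hs0' hs0ne hsne hs'ne hss0 hs's0 hss' hss'' D hD g hg ha' hb''
    · have e : c' = g - s - s := by
        rw [h']
        have h3 : g - s - s + s₀ + s₀ = g - s - s + (s₀ + s₀) := by abel
        rw [h3, hs0', add_zero]
      exact absurd (e ▸ hc'.1) Fiii
  · -- c = g - s - s - s'
    have ha'' : g - s - s - s' ∈ D := h ▸ hc.1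
    obtain ⟨c', hc', -⟩ := hD (g - s - s + s₀)
    rcases ball_cases s s' s₀ hs0' hc'.2 with h' | h' | h' | h' | h' | h'
    · exact absurd (h' ▸ hc'.1) Fv
    · have e : c' = g - s + s₀ := by rw [h']; abel
      exact absurd (e ▸ hc'.1) Fiv
    · have e : c' = g - s - s - s + s₀ := by rw [h']; abel
      exact Or.inr (e ▸ hc'.1)
    · -- c' = g - s - s + s₀ + s' : chainB with -s'
      exfalso
      have hb' : g - s - s + s₀ + s' ∈ D := h' ▸ hc'.1
      have hA : g - s - s + -s' ∈ D := by
        have e : g - s - s - s' = g - s - s + -s' := by abel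
        exact e ▸ ha''
      have hB : g - s - s - -s' + s₀ ∈ D := by
        have e : g - s - s + s₀ + s' = g - s - s - -s' + s₀ := by abel
        exact e ▸ hb'
      exact chainB s (-s') s₀ hs0' hs0ne hsne hns'ne hss0 hns's0 hssn' hssn'' D hD' g hg hA hB
    · -- c' = g - s - s + s₀ - s' : clash with ha''
      exfalso
      have hb'' : g - s - s + s₀ - s' ∈ D := h' ▸ hc'.1
      have e : g - s - s - s' = g - s - s + s₀ - s' := dom_unique hD
        ⟨ha'', Or.inl rfl⟩
        ⟨hb'', Or.inr (adj_of_eq _ hms0 hs0ne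
          (by abel : g - s - s + s₀ - s' = (g - s - s - s') + s₀))⟩
      exact hs0ne ((eq_of_word 0 s₀ e (by abel)).symm)
    · have e : c' = g - s - s := by
        rw [h']
        have h3 : g - s - s + s₀ + s₀ = g - s - s + (s₀ + s₀) := by abel
        rw [h3, hs0', add_zero]
      exact absurd (e ▸ hc'.1) Fiii
  · exact absurd (h ▸ hc.1) Fv
end

section
/- Let Cay(G,S) be a connected quintic Cayley graph on a finite abelian group with S = {s, -s, s', -s', s₀}, s₀ an involution, o(s), o(s') > 2, and let D be a perfect code. Then either (g + s + s' + s₀ ∈ D for all g ∈ D) or (g - s + s' + s₀ ∈ D for all g ∈ D). -/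
section PerfectCodeAux

variable {G : Type*} [AddCommGroup G]

/-- Membership in the closed connection set `T = {0, s, -s, s', -s', s₀}`. -/
def InT (s s' s₀ x : G) : Prop :=
  x = 0 ∨ x = s ∨ x = -s ∨ x = s' ∨ x = -s' ∨ x = s₀

lemma InT_zero (s s' s₀ : G) : InT s s' s₀ 0 := Or.inl rfl
lemma InT_s (s s' s₀ : G) : InT s s' s₀ s := Or.inr (Or.inl rfl)
lemma InT_ns (s s' s₀ : G) : InT s s' s₀ (-s) := Or.inr (Or.inr (Or.inl rfl))
lemma InT_s2 (s s' s₀ : G) : InT s s' s₀ s' := Or.inr (Or.inr (Or.inr (Or.inl rfl)))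
lemma InT_ns2 (s s' s₀ : G) : InT s s' s₀ (-s') :=
  Or.inr (Or.inr (Or.inr (Or.inr (Or.inl rfl))))
lemma InT_s0 (s s' s₀ : G) : InT s s' s₀ s₀ :=
  Or.inr (Or.inr (Or.inr (Or.inr (Or.inr rfl))))

lemma InT_negs {s s' s₀ x : G} : InT (-s) s' s₀ x ↔ InT s s' s₀ x := by
  unfold InT; rw [neg_neg]; tauto

lemma InT_negs2 {s s' s₀ x : G} : InT s (-s') s₀ x ↔ InT s s' s₀ x := by
  unfold InT; rw [neg_neg]; tauto

lemma cand_eq {v c X : G} (h : v - c = X) : c = v - X := by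
  have h4 : c - (v - X) = -(v - c - X) := by abel
  rw [h, sub_self, neg_zero] at h4
  exact sub_eq_zero.mp h4

/-- The bundle of facts we use about a perfect code. -/
structure Good_s4 (s s' s₀ : G) (D : Set G) : Prop where
  h2 : s₀ + s₀ = 0
  hs0 : s ≠ 0
  hs'0 : s' ≠ 0
  h00 : s₀ ≠ 0
  h2s : s + s ≠ 0
  h2s' : s' + s' ≠ 0
  hss' : s ≠ s'
  hssn' : s ≠ -s'
  hs₀s : s₀ ≠ s
  hs₀ns : s₀ ≠ -s
  hs₀s' : s₀ ≠ s'
  hs₀ns' : s₀ ≠ -s'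
  hE : ∀ v, ∃ c ∈ D, InT s s' s₀ (v - c)
  hU : ∀ v c c', c ∈ D → c' ∈ D → InT s s' s₀ (v - c) → InT s s' s₀ (v - c') → c = c'

lemma elimMaster {s s' s₀ : G} {D : Set G}
    (hU : ∀ v c c', c ∈ D → c' ∈ D → InT s s' s₀ (v - c) → InT s s' s₀ (v - c') → c = c')
    {c1 c2 : G} (h1 : c1 ∈ D) (h2 : c2 ∈ D) {t1 t2 : G}
    (ht1 : InT s s' s₀ t1) (ht2 : InT s s' s₀ t2)
    (heq : c1 + t1 = c2 + t2) : c1 = c2 := by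
  apply hU (c1 + t1) c1 c2 h1 h2
  · rw [add_sub_cancel_left]; exact ht1
  · rw [heq, add_sub_cancel_left]; exact ht2

lemma contraEq {A B w z : G} (res : A = B) (hw : A - B = w - z) (hne : w ≠ z) : False := by
  rw [res, sub_self] at hw
  exact hne (sub_eq_zero.mp hw.symm)

lemma Good_s4.negs {s s' s₀ : G} {D : Set G} (h : Good_s4 s s' s₀ D) : Good_s4 (-s) s' s₀ D where
  h2 := h.h2
  hs0 := neg_ne_zero.mpr h.hs0
  hs'0 := h.hs'0
  h00 := h.h00
  h2s := by
    intro hh; rw [← neg_add] at hh; exact h.h2s (neg_eq_zero.mp hh)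
  h2s' := h.h2s'
  hss' := fun hh => h.hssn' (neg_eq_iff_eq_neg.mp hh)
  hssn' := fun hh => h.hss' (neg_injective hh)
  hs₀s := h.hs₀ns
  hs₀ns := by rw [neg_neg]; exact h.hs₀s
  hs₀s' := h.hs₀s'
  hs₀ns' := h.hs₀ns'
  hE := by
    intro v; obtain ⟨c, hc, hct⟩ := h.hE v; exact ⟨c, hc, InT_negs.mpr hct⟩
  hU := fun v c c' hc hc' h1 h2 => h.hU v c c' hc hc' (InT_negs.mp h1) (InT_negs.mp h2)

lemma Good_s4.negs2 {s s' s₀ : G} {D : Set G} (h : Good_s4 s s' s₀ D) : Good_s4 s (-s') s₀ D where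
  h2 := h.h2
  hs0 := h.hs0
  hs'0 := neg_ne_zero.mpr h.hs'0
  h00 := h.h00
  h2s := h.h2s
  h2s' := by
    intro hh; rw [← neg_add] at hh; exact h.h2s' (neg_eq_zero.mp hh)
  hss' := h.hssn'
  hssn' := by rw [neg_neg]; exact h.hss'
  hs₀s := h.hs₀s
  hs₀ns := h.hs₀ns
  hs₀s' := h.hs₀ns'
  hs₀ns' := by rw [neg_neg]; exact h.hs₀s'
  hE := by
    intro v; obtain ⟨c, hc, hct⟩ := h.hE v; exact ⟨c, hc, InT_negs2.mpr hct⟩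
  hU := fun v c c' hc hc' h1 h2 => h.hU v c c' hc hc' (InT_negs2.mp h1) (InT_negs2.mp h2)

/-- The key local lemma: around each codeword, `d + s + s' + s₀` or `d - s + s' + s₀`
is a codeword. -/
lemma keyLocal {s s' s₀ : G} {D : Set G} (h : Good_s4 s s' s₀ D) {d : G} (hd : d ∈ D) :
    d + (s + s' + s₀) ∈ D ∨ d + (-s + s' + s₀) ∈ D := by
  by_contra hcon
  push_neg at hcon
  obtain ⟨hA, hB⟩ := hcon
  -- Round 1 : the vertex d + s' + s₀ must be covered by d + 2s' + s₀.
  have hR1 : d + s' + s₀ - -s' ∈ D := by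
    obtain ⟨c, hc, hct⟩ := h.hE (d + s' + s₀)
    rcases hct with hh|hh|hh|hh|hh|hh
    · rw [cand_eq hh] at hc
      exact (contraEq (elimMaster h.hU hc hd (InT_s0 s s' s₀) (InT_s2 s s' s₀)
        (by rw [show (d+s'+s₀-0)+s₀ = (d+s')+(s₀+s₀) from by abel, h.h2, add_zero]))
        (by rw [show (d+s'+s₀-0) - d = (s'-s₀)+(s₀+s₀) from by abel, h.h2, add_zero])
        (fun e => h.hs₀s' e.symm)).elim
    · rw [cand_eq hh] at hc
      exact (hB (by rw [show d+(-s+s'+s₀) = d+s'+s₀-s from by abel]; exact hc)).elim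
    · rw [cand_eq hh] at hc
      exact (hA (by rw [show d+(s+s'+s₀) = d+s'+s₀- -s from by abel]; exact hc)).elim
    · rw [cand_eq hh] at hc
      exact (contraEq (elimMaster h.hU hc hd (InT_s0 s s' s₀) (InT_zero s s' s₀)
        (by rw [show (d+s'+s₀-s')+s₀ = (d+0)+(s₀+s₀) from by abel, h.h2, add_zero]))
        (by rw [show (d+s'+s₀-s') - d = s₀ - 0 from by abel]) h.h00).elim
    · rw [cand_eq hh] at hc; exact hc
    · rw [cand_eq hh] at hc
      exact (contraEq (elimMaster h.hU hc hd (InT_zero s s' s₀) (InT_s2 s s' s₀)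
        (by rw [show (d+s'+s₀-s₀)+0 = d+s' from by abel]))
        (by rw [show (d+s'+s₀-s₀) - d = s' - 0 from by abel]) h.hs'0).elim
  -- Round 3 : the vertex d + s + s' must be covered by d + 2s + s'.
  have hR3 : d + s + s' - -s ∈ D := by
    obtain ⟨c, hc, hct⟩ := h.hE (d + s + s')
    rcases hct with hh|hh|hh|hh|hh|hh
    · rw [cand_eq hh] at hc
      exact (contraEq (elimMaster h.hU hc hd (InT_ns2 s s' s₀) (InT_s s s' s₀)
        (by rw [show (d+s+s'-0)+(-s') = d+s from by abel]))
        (by rw [show (d+s+s'-0) - d = s - -s' from by abel]) h.hssn').elim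
    · rw [cand_eq hh] at hc
      exact (contraEq (elimMaster h.hU hc hd (InT_zero s s' s₀) (InT_s2 s s' s₀)
        (by rw [show (d+s+s'-s)+0 = d+s' from by abel]))
        (by rw [show (d+s+s'-s) - d = s' - 0 from by abel]) h.hs'0).elim
    · rw [cand_eq hh] at hc; exact hc
    · rw [cand_eq hh] at hc
      exact (contraEq (elimMaster h.hU hc hd (InT_zero s s' s₀) (InT_s s s' s₀)
        (by rw [show (d+s+s'-s')+0 = d+s from by abel]))
        (by rw [show (d+s+s'-s') - d = s - 0 from by abel]) h.hs0).elim
    · rw [cand_eq hh] at hc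
      exact (contraEq (elimMaster h.hU hc hR1 (InT_s0 s s' s₀) (InT_s s s' s₀)
        (by rw [show (d+s+s'- -s')+s₀ = (d+s'+s₀- -s')+s from by abel]))
        (by rw [show (d+s+s'- -s') - (d+s'+s₀- -s') = s - s₀ from by abel])
        (fun e => h.hs₀s e.symm)).elim
    · rw [cand_eq hh] at hc
      exact (hA (by
        rw [show d+(s+s'+s₀) = (d+s+s'-s₀)+(s₀+s₀) from by abel, h.h2, add_zero]
        exact hc)).elim
  -- Round 4 : the vertex d - s + s' must be covered by d - 2s + s'.
  have hR4 : d - s + s' - s ∈ D := by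
    obtain ⟨c, hc, hct⟩ := h.hE (d - s + s')
    rcases hct with hh|hh|hh|hh|hh|hh
    · rw [cand_eq hh] at hc
      exact (contraEq (elimMaster h.hU hc hd (InT_ns2 s s' s₀) (InT_ns s s' s₀)
        (by rw [show (d-s+s'-0)+(-s') = d+(-s) from by abel]))
        (by rw [show (d-s+s'-0) - d = s' - s from by abel]) (fun e => h.hss' e.symm)).elim
    · rw [cand_eq hh] at hc; exact hc
    · rw [cand_eq hh] at hc
      exact (contraEq (elimMaster h.hU hc hd (InT_zero s s' s₀) (InT_s2 s s' s₀)
        (by rw [show (d-s+s'- -s)+0 = d+s' from by abel]))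
        (by rw [show (d-s+s'- -s) - d = s' - 0 from by abel]) h.hs'0).elim
    · rw [cand_eq hh] at hc
      exact (contraEq (elimMaster h.hU hc hd (InT_zero s s' s₀) (InT_ns s s' s₀)
        (by rw [show (d-s+s'-s')+0 = d+(-s) from by abel]))
        (by rw [show (d-s+s'-s') - d = (-s) - 0 from by abel]) (neg_ne_zero.mpr h.hs0)).elim
    · rw [cand_eq hh] at hc
      exact (contraEq (elimMaster h.hU hc hR1 (InT_s0 s s' s₀) (InT_ns s s' s₀)
        (by rw [show (d-s+s'- -s')+s₀ = (d+s'+s₀- -s')+(-s) from by abel]))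
        (by rw [show (d-s+s'- -s') - (d+s'+s₀- -s') = (-s) - s₀ from by abel])
        (fun e => h.hs₀ns e.symm)).elim
    · rw [cand_eq hh] at hc
      exact (hB (by
        rw [show d+(-s+s'+s₀) = (d-s+s'-s₀)+(s₀+s₀) from by abel, h.h2, add_zero]
        exact hc)).elim
  -- Round 5 : the vertex d + s + s₀ must be covered by d + s - s' + s₀.
  have hR5 : d + s + s₀ - s' ∈ D := by
    obtain ⟨c, hc, hct⟩ := h.hE (d + s + s₀)
    rcases hct with hh|hh|hh|hh|hh|hh
    · rw [cand_eq hh] at hc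
      exact (contraEq (elimMaster h.hU hc hd (InT_s0 s s' s₀) (InT_s s s' s₀)
        (by rw [show (d+s+s₀-0)+s₀ = (d+s)+(s₀+s₀) from by abel, h.h2, add_zero]))
        (by rw [show (d+s+s₀-0) - d = (s-s₀)+(s₀+s₀) from by abel, h.h2, add_zero])
        (fun e => h.hs₀s e.symm)).elim
    · rw [cand_eq hh] at hc
      exact (contraEq (elimMaster h.hU hc hd (InT_s0 s s' s₀) (InT_zero s s' s₀)
        (by rw [show (d+s+s₀-s)+s₀ = (d+0)+(s₀+s₀) from by abel, h.h2, add_zero]))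
        (by rw [show (d+s+s₀-s) - d = s₀ - 0 from by abel]) h.h00).elim
    · rw [cand_eq hh] at hc
      exact (contraEq (elimMaster h.hU hc hR3 (InT_s2 s s' s₀) (InT_s0 s s' s₀)
        (by rw [show (d+s+s₀- -s)+s' = (d+s+s'- -s)+s₀ from by abel]))
        (by rw [show (d+s+s₀- -s) - (d+s+s'- -s) = s₀ - s' from by abel]) h.hs₀s').elim
    · rw [cand_eq hh] at hc; exact hc
    · rw [cand_eq hh] at hc
      exact (hA (by rw [show d+(s+s'+s₀) = d+s+s₀- -s' from by abel]; exact hc)).elim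
    · rw [cand_eq hh] at hc
      exact (contraEq (elimMaster h.hU hc hd (InT_zero s s' s₀) (InT_s s s' s₀)
        (by rw [show (d+s+s₀-s₀)+0 = d+s from by abel]))
        (by rw [show (d+s+s₀-s₀) - d = s - 0 from by abel]) h.hs0).elim
  -- Round 6 : the vertex d - s + s₀ must be covered by d - s - s' + s₀.
  have hR6 : d - s + s₀ - s' ∈ D := by
    obtain ⟨c, hc, hct⟩ := h.hE (d - s + s₀)
    rcases hct with hh|hh|hh|hh|hh|hh
    · rw [cand_eq hh] at hc
      exact (contraEq (elimMaster h.hU hc hd (InT_s0 s s' s₀) (InT_ns s s' s₀)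
        (by rw [show (d-s+s₀-0)+s₀ = (d+(-s))+(s₀+s₀) from by abel, h.h2, add_zero]))
        (by rw [show (d-s+s₀-0) - d = ((-s)-s₀)+(s₀+s₀) from by abel, h.h2, add_zero])
        (fun e => h.hs₀ns e.symm)).elim
    · rw [cand_eq hh] at hc
      exact (contraEq (elimMaster h.hU hc hR4 (InT_s2 s s' s₀) (InT_s0 s s' s₀)
        (by rw [show (d-s+s₀-s)+s' = (d-s+s'-s)+s₀ from by abel]))
        (by rw [show (d-s+s₀-s) - (d-s+s'-s) = s₀ - s' from by abel]) h.hs₀s').elim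
    · rw [cand_eq hh] at hc
      exact (contraEq (elimMaster h.hU hc hd (InT_s0 s s' s₀) (InT_zero s s' s₀)
        (by rw [show (d-s+s₀- -s)+s₀ = (d+0)+(s₀+s₀) from by abel, h.h2, add_zero]))
        (by rw [show (d-s+s₀- -s) - d = s₀ - 0 from by abel]) h.h00).elim
    · rw [cand_eq hh] at hc; exact hc
    · rw [cand_eq hh] at hc
      exact (hB (by rw [show d+(-s+s'+s₀) = d-s+s₀- -s' from by abel]; exact hc)).elim
    · rw [cand_eq hh] at hc
      exact (contraEq (elimMaster h.hU hc hd (InT_zero s s' s₀) (InT_ns s s' s₀)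
        (by rw [show (d-s+s₀-s₀)+0 = d+(-s) from by abel]))
        (by rw [show (d-s+s₀-s₀) - d = (-s) - 0 from by abel]) (neg_ne_zero.mpr h.hs0)).elim
  -- Final contradiction : the two surviving codewords differ by 2s.
  exact contraEq (elimMaster h.hU hR5 hR6 (InT_ns s s' s₀) (InT_s s s' s₀)
    (by rw [show (d+s+s₀-s')+(-s) = (d-s+s₀-s')+s from by abel]))
    (by rw [show (d+s+s₀-s') - (d-s+s₀-s') = s - -s from by abel])
    (fun e => h.h2s (eq_neg_iff_add_eq_zero.mp e))

/-- Mirror version of the key local lemma. -/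
lemma keyLocal2 {s s' s₀ : G} {D : Set G} (h : Good_s4 s s' s₀ D) {d : G} (hd : d ∈ D) :
    d + (-s - s' + s₀) ∈ D ∨ d + (s - s' + s₀) ∈ D := by
  rcases keyLocal h.negs.negs2 hd with hh | hh
  · left; rw [show d + (-s - s' + s₀) = d + (-s + -s' + s₀) from by abel]; exact hh
  · right; rw [show d + (s - s' + s₀) = d + (- -s + -s' + s₀) from by abel]; exact hh

lemma stepUp {s s' s₀ : G} {D : Set G} (h : Good_s4 s s' s₀ D) {e : G}
    (he : e ∈ D) (hea : e + (s + s' + s₀) ∈ D) :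
    (e + (s + s' + s₀)) + (s + s' + s₀) ∈ D := by
  rcases keyLocal h hea with hh | hh
  · exact hh
  · exact (contraEq (elimMaster h.hU hh he (InT_ns2 s s' s₀) (InT_s2 s s' s₀)
      (by rw [show ((e+(s+s'+s₀))+(-s+s'+s₀)) + (-s') = (e+s') + (s₀+s₀) from by abel,
        h.h2, add_zero]))
      (by rw [show ((e+(s+s'+s₀))+(-s+s'+s₀)) - e = (s' - -s') + (s₀+s₀) from by abel,
        h.h2, add_zero])
      (fun hh2 => h.h2s' (eq_neg_iff_add_eq_zero.mp hh2))).elim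

lemma stepDown {s s' s₀ : G} {D : Set G} (h : Good_s4 s s' s₀ D) {e : G}
    (he : e ∈ D) (hea : e + (s + s' + s₀) ∈ D) :
    e - (s + s' + s₀) ∈ D := by
  rcases keyLocal2 h he with hh | hh
  · rw [show e - (s+s'+s₀) = (e + (-s-s'+s₀)) - (s₀+s₀) from by abel, h.h2, sub_zero]
    exact hh
  · exact (contraEq (elimMaster h.hU hh hea (InT_s2 s s' s₀) (InT_ns2 s s' s₀)
      (by rw [show (e+(s-s'+s₀))+s' = (e+(s+s'+s₀))+(-s') from by abel]))
      (by rw [show (e+(s-s'+s₀)) - (e+(s+s'+s₀)) = (-s') - s' from by abel])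
      (fun hh2 => h.h2s' (neg_eq_iff_add_eq_zero.mp hh2))).elim

lemma zsmul_succ_eq (x : G) (k : ℤ) (w : G) : x + (k+1)•w = x + k•w + w := by
  rw [add_zsmul, one_zsmul, ← add_assoc]

lemma chain {s s' s₀ : G} {D : Set G} (h : Good_s4 s s' s₀ D) {e : G}
    (he : e ∈ D) (hea : e + (s + s' + s₀) ∈ D) :
    ∀ n : ℤ, e + n • (s + s' + s₀) ∈ D := by
  have key : ∀ n : ℤ, e + n • (s+s'+s₀) ∈ D ∧ e + (n+1) • (s+s'+s₀) ∈ D := by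
    intro n
    induction n using Int.induction_on with
    | zero =>
      constructor
      · simpa using he
      · rw [zsmul_succ_eq]; simpa using hea
    | succ i ih =>
      refine ⟨ih.2, ?_⟩
      have h2' := ih.2
      rw [zsmul_succ_eq] at h2'
      have h1' := ih.1
      have := stepUp h h1' (by rw [← add_assoc] at h2' ⊢; exact h2')
      rw [zsmul_succ_eq, zsmul_succ_eq]
      rw [← add_assoc] at this ⊢
      exact this
    | pred i ih =>
      constructor
      · have h2' := ih.2
        rw [zsmul_succ_eq] at h2'
        have := stepDown h ih.1 (by rw [← add_assoc] at h2' ⊢; exact h2')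
        rw [show (-(i:ℤ)-1) = (-(i:ℤ)) - 1 from by ring, sub_zsmul, one_zsmul,
          ← sub_eq_add_neg, ← add_sub_assoc]
        exact this
      · rw [show (-(i:ℤ)-1+1) = -(i:ℤ) from by ring]
        exact ih.1
  exact fun n => (key n).1

end PerfectCodeAux

theorem stmt4 (G : Type*) [AddCommGroup G] [Fintype G] (s s' s₀ : G)
    (h5 : ({s, -s, s', -s', s₀} : Set G).ncard = 5)
    (h0 : addOrderOf s₀ = 2) (hs : 2 < addOrderOf s) (hs' : 2 < addOrderOf s')
    (hgen : AddSubgroup.closure ({s, -s, s', -s', s₀} : Set G) = ⊤)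
    (D : Set G)
    (hD : IsPerfectCode (cayley G ({s, -s, s', -s', s₀} : Set G)) D) :
    (∀ g ∈ D, g + s + s' + s₀ ∈ D) ∨ (∀ g ∈ D, g - s + s' + s₀ ∈ D) := by
  -- basic nonvanishing facts
  have h2 : s₀ + s₀ = 0 := by
    have := addOrderOf_nsmul_eq_zero s₀
    rwa [h0, two_nsmul] at this
  have hnegs₀ : -s₀ = s₀ := neg_eq_of_add_eq_zero_left h2
  have h00 : s₀ ≠ 0 := by
    intro hh; rw [hh, addOrderOf_zero] at h0; omega
  have hs0 : s ≠ 0 := by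
    intro hh; rw [hh, addOrderOf_zero] at hs; omega
  have hs'0 : s' ≠ 0 := by
    intro hh; rw [hh, addOrderOf_zero] at hs'; omega
  have h2s : s + s ≠ 0 := by
    intro hh
    have hdvd : addOrderOf s ∣ 2 := addOrderOf_dvd_of_nsmul_eq_zero (by rw [two_nsmul]; exact hh)
    have := Nat.le_of_dvd (by norm_num) hdvd
    omega
  have h2s' : s' + s' ≠ 0 := by
    intro hh
    have hdvd : addOrderOf s' ∣ 2 :=
      addOrderOf_dvd_of_nsmul_eq_zero (by rw [two_nsmul]; exact hh)
    have := Nat.le_of_dvd (by norm_num) hdvd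
    omega
  -- distinctness facts from `h5`
  have card4 : ∀ a b c d : G, ({a, b, c, d} : Set G).ncard ≤ 4 := by
    intro a b c d
    have h1 := Set.ncard_insert_le a ({b, c, d} : Set G)
    have h2 := Set.ncard_insert_le b ({c, d} : Set G)
    have h3 := Set.ncard_insert_le c ({d} : Set G)
    rw [Set.ncard_singleton] at h3
    omega
  have hcard : ∀ A : Set G, ({s, -s, s', -s', s₀} : Set G) ⊆ A → A.ncard ≤ 4 → False := by
    intro A hsub hle
    have := Set.ncard_le_ncard hsub (Set.toFinite A)
    rw [h5] at this
    omega
  have hss' : s ≠ s' := by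
    intro hh
    exact hcard {s, -s, -s', s₀} (by
      intro x hx
      simp only [Set.mem_insert_iff, Set.mem_singleton_iff] at hx ⊢
      rcases hx with rfl|rfl|rfl|rfl|rfl <;> simp only [hh] <;> tauto) (card4 _ _ _ _)
  have hssn' : s ≠ -s' := by
    intro hh
    exact hcard {s, -s, s', s₀} (by
      intro x hx
      simp only [Set.mem_insert_iff, Set.mem_singleton_iff] at hx ⊢
      rcases hx with rfl|rfl|rfl|rfl|rfl <;> simp only [hh] <;> tauto) (card4 _ _ _ _)
  have hs₀s : s₀ ≠ s := by
    intro hh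
    exact hcard {s, -s, s', -s'} (by
      intro x hx
      simp only [Set.mem_insert_iff, Set.mem_singleton_iff] at hx ⊢
      rcases hx with rfl|rfl|rfl|rfl|rfl <;> simp only [hh] <;> tauto) (card4 _ _ _ _)
  have hs₀ns : s₀ ≠ -s := by
    intro hh
    exact hcard {s, -s, s', -s'} (by
      intro x hx
      simp only [Set.mem_insert_iff, Set.mem_singleton_iff] at hx ⊢
      rcases hx with rfl|rfl|rfl|rfl|rfl <;> simp only [hh] <;> tauto) (card4 _ _ _ _)
  have hs₀s' : s₀ ≠ s' := by
    intro hh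
    exact hcard {s, -s, s', -s'} (by
      intro x hx
      simp only [Set.mem_insert_iff, Set.mem_singleton_iff] at hx ⊢
      rcases hx with rfl|rfl|rfl|rfl|rfl <;> simp only [hh] <;> tauto) (card4 _ _ _ _)
  have hs₀ns' : s₀ ≠ -s' := by
    intro hh
    exact hcard {s, -s, s', -s'} (by
      intro x hx
      simp only [Set.mem_insert_iff, Set.mem_singleton_iff] at hx ⊢
      rcases hx with rfl|rfl|rfl|rfl|rfl <;> simp only [hh] <;> tauto) (card4 _ _ _ _)
  -- translate the perfect-code condition
  have hSmem : ∀ x : G, x ∈ ({s, -s, s', -s', s₀} : Set G) ↔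
      (x = s ∨ x = -s ∨ x = s' ∨ x = -s' ∨ x = s₀) := by
    intro x; simp [Set.mem_insert_iff]
  have hST : ∀ v c : G,
      (v = c ∨ (cayley G ({s, -s, s', -s', s₀} : Set G)).Adj v c) ↔ InT s s' s₀ (v - c) := by
    intro v c
    constructor
    · rintro (rfl | ⟨hne, hvc | hvc⟩)
      · exact Or.inl (sub_self _)
      · rw [hSmem] at hvc
        rcases hvc with hh|hh|hh|hh|hh
        · exact Or.inr (Or.inr (Or.inl (by rw [show v - c = -(c - v) from by abel, hh])))
        · exact Or.inr (Or.inl (by rw [show v - c = -(c - v) from by abel, hh, neg_neg]))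
        · exact Or.inr (Or.inr (Or.inr (Or.inr (Or.inl
            (by rw [show v - c = -(c - v) from by abel, hh])))))
        · exact Or.inr (Or.inr (Or.inr (Or.inl
            (by rw [show v - c = -(c - v) from by abel, hh, neg_neg]))))
        · exact Or.inr (Or.inr (Or.inr (Or.inr (Or.inr
            (by rw [show v - c = -(c - v) from by abel, hh]; exact hnegs₀)))))
      · rw [hSmem] at hvc
        rcases hvc with hh|hh|hh|hh|hh
        · exact Or.inr (Or.inl hh)
        · exact Or.inr (Or.inr (Or.inl hh))
        · exact Or.inr (Or.inr (Or.inr (Or.inl hh)))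
        · exact Or.inr (Or.inr (Or.inr (Or.inr (Or.inl hh))))
        · exact Or.inr (Or.inr (Or.inr (Or.inr (Or.inr hh))))
    · intro hh
      rcases hh with hh|hh|hh|hh|hh|hh
      · exact Or.inl (sub_eq_zero.mp hh)
      · refine Or.inr ⟨?_, Or.inr (by rw [hSmem]; exact Or.inl hh)⟩
        intro heq; rw [heq, sub_self] at hh; exact hs0 hh.symm
      · refine Or.inr ⟨?_, Or.inr (by rw [hSmem]; exact Or.inr (Or.inl hh))⟩
        intro heq; rw [heq, sub_self] at hh; exact (neg_ne_zero.mpr hs0) hh.symm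
      · refine Or.inr ⟨?_, Or.inr (by rw [hSmem]; exact Or.inr (Or.inr (Or.inl hh)))⟩
        intro heq; rw [heq, sub_self] at hh; exact hs'0 hh.symm
      · refine Or.inr ⟨?_, Or.inr (by rw [hSmem]; exact Or.inr (Or.inr (Or.inr (Or.inl hh))))⟩
        intro heq; rw [heq, sub_self] at hh; exact (neg_ne_zero.mpr hs'0) hh.symm
      · refine Or.inr ⟨?_, Or.inr ?_⟩
        · intro heq; rw [heq, sub_self] at hh; exact h00 hh.symm
        · rw [hSmem]; exact Or.inr (Or.inr (Or.inr (Or.inr hh)))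
  have hE : ∀ v, ∃ c ∈ D, InT s s' s₀ (v - c) := by
    intro v
    obtain ⟨c, hc, -⟩ := hD v
    exact ⟨c, hc.1, (hST v c).mp hc.2⟩
  have hU : ∀ v c c', c ∈ D → c' ∈ D →
      InT s s' s₀ (v - c) → InT s s' s₀ (v - c') → c = c' := by
    intro v c c' hc hc' h1 h2'
    obtain ⟨c₀, -, huniq⟩ := hD v
    rw [huniq c ⟨hc, (hST v c).mpr h1⟩, huniq c' ⟨hc', (hST v c').mpr h2'⟩]
  have hG : Good_s4 s s' s₀ D :=
    ⟨h2, hs0, hs'0, h00, h2s, h2s', hss', hssn', hs₀s, hs₀ns, hs₀s', hs₀ns', hE, hU⟩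
  -- representation of every group element
  have Hrep : ∀ g : G, ∃ p q r : ℤ, g = p•s + q•s' + r•s₀ := by
    intro g
    have hg : g ∈ AddSubgroup.closure ({s, -s, s', -s', s₀} : Set G) := by rw [hgen]; trivial
    induction hg using AddSubgroup.closure_induction with
    | mem x hx =>
      simp only [Set.mem_insert_iff, Set.mem_singleton_iff] at hx
      rcases hx with rfl|rfl|rfl|rfl|rfl
      · exact ⟨1, 0, 0, by module⟩
      · exact ⟨-1, 0, 0, by module⟩
      · exact ⟨0, 1, 0, by module⟩
      · exact ⟨0, -1, 0, by module⟩
      · exact ⟨0, 0, 1, by module⟩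
    | zero => exact ⟨0, 0, 0, by module⟩
    | add x y hx hy ihx ihy =>
      obtain ⟨p, q, r, hx⟩ := ihx; obtain ⟨p', q', r', hy⟩ := ihy
      exact ⟨p+p', q+q', r+r', by rw [hx, hy]; module⟩
    | neg x hx ihx =>
      obtain ⟨p, q, r, hx⟩ := ihx
      exact ⟨-p, -q, -r, by rw [hx]; module⟩
  have hks₀ : ∀ k : ℤ, k•s₀ = 0 ∨ k•s₀ = s₀ := by
    intro k
    have hdecomp : k•s₀ = (k % 2)•s₀ := by
      conv_lhs => rw [← Int.mul_ediv_add_emod k 2]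
      rw [add_zsmul, Int.mul_comm, mul_zsmul, two_zsmul, h2, smul_zero, zero_add]
    rcases Int.emod_two_eq k with hh | hh <;> rw [hdecomp, hh]
    · left; exact zero_zsmul s₀
    · right; exact one_zsmul s₀
  -- main argument
  by_contra hcon
  push_neg at hcon
  obtain ⟨⟨u, hu, huA⟩, ⟨v, hv, hvB⟩⟩ := hcon
  have hub : u + (-s + s' + s₀) ∈ D := by
    rcases keyLocal hG hu with hh | hh
    · exact absurd (by rw [show u + s + s' + s₀ = u + (s+s'+s₀) from by abel]; exact hh) huA
    · exact hh
  have hva : v + (s + s' + s₀) ∈ D := by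
    rcases keyLocal hG hv with hh | hh
    · exact hh
    · exact absurd (by rw [show v - s + s' + s₀ = v + (-s+s'+s₀) from by abel]; exact hh) hvB
  -- chains in both directions
  have chainA : ∀ n : ℤ, v + n•(s+s'+s₀) ∈ D := chain hG hv hva
  have chainB : ∀ n : ℤ, u + n•(-s+s'+s₀) ∈ D := by
    have := chain hG.negs (e := u) hu (by
      rw [show u + (-s + s' + s₀) = u + (-s+s'+s₀) from rfl] at hub; exact hub)
    exact this
  -- find intersecting members of the two chains
  obtain ⟨p, q, r, hpqr⟩ := Hrep (u - v)
  have hu' : u = v + (p•s + q•s' + r•s₀) := by rw [← hpqr]; abel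
  set n : ℤ := (p+q)/2 with hn
  set m : ℤ := n - q with hm
  have hsplit : 2*n + (p+q) % 2 = p + q := by rw [hn]; exact Int.mul_ediv_add_emod (p+q) 2
  have hkey : u + m•(-s+s'+s₀) = (v + n•(s+s'+s₀)) + (((p+q) % 2)•s + (r-q)•s₀) := by
    rw [hu', hm]; match_scalars <;> omega
  have hAv : v + n•(s+s'+s₀) ∈ D := chainA n
  have hBu : u + m•(-s+s'+s₀) ∈ D := chainB m
  have hAv1 : (v + n•(s+s'+s₀)) + (s+s'+s₀) ∈ D := by
    have := chainA (n+1); rw [zsmul_succ_eq] at this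
    rw [← add_assoc] at this ⊢; exact this
  have hBu1 : (u + m•(-s+s'+s₀)) + (-s+s'+s₀) ∈ D := by
    have := chainB (m+1); rw [zsmul_succ_eq] at this
    rw [← add_assoc] at this ⊢; exact this
  set V : G := v + n•(s+s'+s₀) with hV
  set U : G := u + m•(-s+s'+s₀) with hU2
  -- U = V
  have hUV : U = V := by
    rcases hks₀ (r - q) with hκ | hκ <;> rcases Int.emod_two_eq (p+q) with hε | hε <;>
      rw [hκ, hε] at hkey
    · rw [zero_zsmul, add_zero, add_zero] at hkey; exact hkey
    · rw [one_zsmul, add_zero] at hkey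
      exact elimMaster hU hBu hAv (InT_zero s s' s₀) (InT_s s s' s₀)
        (by rw [hkey, add_zero])
    · rw [zero_zsmul, zero_add] at hkey
      exact elimMaster hU hBu hAv (InT_zero s s' s₀) (InT_s0 s s' s₀)
        (by rw [hkey, add_zero])
    · rw [one_zsmul] at hkey
      exact elimMaster hU hBu hAv (InT_s0 s s' s₀) (InT_s s s' s₀)
        (by rw [hkey, show (V + (s + s₀)) + s₀ = (V + s) + (s₀ + s₀) from by abel,
          h2, add_zero])
  rw [hUV] at hBu1
  -- final contradiction: V + a ∈ D and V + b ∈ D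
  exact (contraEq (elimMaster hU hAv1 hBu1 (InT_ns s s' s₀) (InT_s s s' s₀)
    (by rw [show (V+(s+s'+s₀))+(-s) = (V+(-s+s'+s₀))+s from by abel]))
    (by rw [show (V+(s+s'+s₀)) - (V+(-s+s'+s₀)) = s - -s from by abel])
    (fun e => h2s (eq_neg_iff_add_eq_zero.mp e))).elim
end

section
/- Let Cay(G,S) be a connected quintic Cayley graph on a finite abelian group with S = {s, -s, s', -s', s₀}, s₀ an involution, o(s), o(s') > 2. Suppose D is a perfect code such that g + a·s + s' + s₀ ∈ D for all g ∈ D, where a ∈ {-1, 1}. If h·s + l·s' = 0 for integers h, l with 0 ≤ h ≤ o(s) and 0 ≤ l ≤ o(s'), then 3 divides l - a·h. -/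
open Classical in
/-- Weight function used to 3-color the group. -/
noncomputable def wfun {G : Type*} [AddCommGroup G] (s s' : G) (x : G) : ZMod 3 :=
  if x = s then -1 else if x = -s then 1 else if x = s' then 1 else if x = -s' then -1 else 0

/-- The coloring induced by a code map `E`. -/
noncomputable def psi {G : Type*} [AddCommGroup G] (s s' : G) (E : G → G) (v : G) : ZMod 3 :=
  wfun s s' (v - E v)

lemma psi_def {G : Type*} [AddCommGroup G] (s s' : G) (E : G → G) (v : G) :
    psi s s' E v = wfun s s' (v - E v) := rfl

lemma ezh {G : Type*} [AddCommGroup G] {A B X : G} (q : A = B) (hX : B - A = X) : X = 0 := by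
  rw [← hX, q, sub_self]

set_option maxHeartbeats 2000000 in
theorem key (G : Type*) [AddCommGroup G] [Fintype G] (s s' s₀ : G)
    (h5 : ({s, -s, s', -s', s₀} : Set G).ncard = 5)
    (h0 : addOrderOf s₀ = 2) (hs : 2 < addOrderOf s) (hs' : 2 < addOrderOf s')
    (D : Set G)
    (hD : IsPerfectCode (cayley G ({s, -s, s', -s', s₀} : Set G)) D)
    (hshift : ∀ g ∈ D, g + s + s' + s₀ ∈ D)
    (h l : ℤ) (hrel : h • s + l • s' = 0) :
    (3 : ℤ) ∣ (l - h) := by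
  classical
  -- basic nonzero / order facts
  have hs0 : s ≠ 0 := by
    rintro rfl; rw [addOrderOf_zero] at hs; omega
  have hs'0 : s' ≠ 0 := by
    rintro rfl; rw [addOrderOf_zero] at hs'; omega
  have hs₀0 : s₀ ≠ 0 := by
    rintro rfl; rw [addOrderOf_zero] at h0; omega
  have h2s : s + s ≠ 0 := by
    intro hq
    have hd2 : addOrderOf s ∣ 2 := addOrderOf_dvd_of_nsmul_eq_zero (by rw [two_nsmul]; exact hq)
    have := Nat.le_of_dvd (by norm_num) hd2
    omega
  have h2s' : s' + s' ≠ 0 := by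
    intro hq
    have hd2 : addOrderOf s' ∣ 2 := addOrderOf_dvd_of_nsmul_eq_zero (by rw [two_nsmul]; exact hq)
    have := Nat.le_of_dvd (by norm_num) hd2
    omega
  have h2s₀ : s₀ + s₀ = 0 := by
    have h1 : (2 : ℕ) • s₀ = 0 := by rw [← h0]; exact addOrderOf_nsmul_eq_zero s₀
    rwa [two_nsmul] at h1
  have hns₀ : -s₀ = s₀ := neg_eq_of_add_eq_zero_right h2s₀
  have hss₀ : s ≠ s₀ := by
    intro hq; rw [hq, h0] at hs; omega
  have hs's₀ : s' ≠ s₀ := by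
    intro hq; rw [hq, h0] at hs'; omega
  -- distinctness from h5
  have hss' : s' ≠ s := by
    intro hq; subst hq
    have h1 : ({s', -s', s', -s', s₀} : Set G) = {s', -s', s₀} := by
      ext x; simp only [Set.mem_insert_iff, Set.mem_singleton_iff]; tauto
    rw [h1] at h5
    have h2 := Set.ncard_insert_le s' ({-s', s₀} : Set G)
    have h3 := Set.ncard_insert_le (-s') ({s₀} : Set G)
    rw [Set.ncard_singleton] at h3
    omega
  have hs'ns : s' ≠ -s := by
    intro hq; subst hq
    have h1 : ({s, -s, -s, - -s, s₀} : Set G) = {s, -s, s₀} := by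
      ext x; simp only [Set.mem_insert_iff, Set.mem_singleton_iff, neg_neg]; tauto
    rw [h1] at h5
    have h2 := Set.ncard_insert_le s ({-s, s₀} : Set G)
    have h3 := Set.ncard_insert_le (-s) ({s₀} : Set G)
    rw [Set.ncard_singleton] at h3
    omega
  have hnss : -s ≠ s := by
    intro hq; apply h2s; nth_rewrite 1 [← hq]; exact neg_add_cancel s
  have hnss' : -s' ≠ s' := by
    intro hq; apply h2s'; nth_rewrite 1 [← hq]; exact neg_add_cancel s'
  -- wfun evaluation
  have nns's : -s' ≠ s := fun hq => hs'ns (by rw [← hq, neg_neg])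
  have nns'ns : -s' ≠ -s := fun hq => hss' (neg_inj.mp hq)
  have ns₀s : s₀ ≠ s := fun hq => hss₀ hq.symm
  have ns₀ns : s₀ ≠ -s := fun hq : s₀ = -s => hss₀ (by rw [← hns₀] at hq; exact (neg_inj.mp hq).symm)
  have ns₀s' : s₀ ≠ s' := fun hq => hs's₀ hq.symm
  have ns₀ns' : s₀ ≠ -s' := fun hq : s₀ = -s' => hs's₀ (by rw [← hns₀] at hq; exact (neg_inj.mp hq).symm)
  have n0s : (0 : G) ≠ s := fun hq => hs0 hq.symm
  have n0ns : (0 : G) ≠ -s := fun hq => hs0 (neg_eq_zero.mp hq.symm)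
  have n0s' : (0 : G) ≠ s' := fun hq => hs'0 hq.symm
  have n0ns' : (0 : G) ≠ -s' := fun hq => hs'0 (neg_eq_zero.mp hq.symm)
  have ws : wfun s s' s = -1 := by simp [wfun]
  have wns : wfun s s' (-s) = 1 := by simp [wfun, hnss]
  have ws' : wfun s s' (s' : G) = 1 := by simp [wfun, hss', hs'ns]
  have wns' : wfun s s' (-s' : G) = -1 := by simp [wfun, nns's, nns'ns, hnss']
  have ws₀ : wfun s s' s₀ = 0 := by simp [wfun, ns₀s, ns₀ns, ns₀s', ns₀ns']
  have wzero : wfun s s' (0 : G) = 0 := by simp [wfun, n0s, n0ns, n0s', n0ns']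
  -- reformulate the perfect-code condition
  have exu : ∀ v : G, ∃! c : G, c ∈ D ∧
      (v - c = 0 ∨ v - c = s ∨ v - c = -s ∨ v - c = s' ∨ v - c = -s' ∨ v - c = s₀) := by
    intro v
    have equiv : ∀ c : G, (c ∈ D ∧ (v = c ∨ (cayley G ({s, -s, s', -s', s₀} : Set G)).Adj v c)) ↔
        (c ∈ D ∧ (v - c = 0 ∨ v - c = s ∨ v - c = -s ∨ v - c = s' ∨ v - c = -s' ∨ v - c = s₀)) := by
      intro c
      constructor
      · rintro ⟨hcD, hvc⟩
        refine ⟨hcD, ?_⟩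
        rcases hvc with rfl | ⟨hne, hm | hm⟩
        · exact Or.inl (sub_self _)
        · simp only [Set.mem_insert_iff, Set.mem_singleton_iff] at hm
          rcases hm with hq|hq|hq|hq|hq
          · right; right; left; rw [← neg_sub c v, hq]
          · right; left; rw [← neg_sub c v, hq, neg_neg]
          · right; right; right; right; left; rw [← neg_sub c v, hq]
          · right; right; right; left; rw [← neg_sub c v, hq, neg_neg]
          · right; right; right; right; right; rw [← neg_sub c v, hq, hns₀]
        · simp only [Set.mem_insert_iff, Set.mem_singleton_iff] at hm
          exact Or.inr hm
      · rintro ⟨hcD, hx⟩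
        refine ⟨hcD, ?_⟩
        rcases hx with hq|hq|hq|hq|hq|hq
        · exact Or.inl (sub_eq_zero.mp hq)
        · refine Or.inr ⟨fun e => hs0 (by rw [e, sub_self] at hq; exact hq.symm),
            Or.inr (by rw [hq]; simp)⟩
        · refine Or.inr ⟨fun e => hs0 (by rw [e, sub_self] at hq; exact neg_eq_zero.mp hq.symm),
            Or.inr (by rw [hq]; simp)⟩
        · refine Or.inr ⟨fun e => hs'0 (by rw [e, sub_self] at hq; exact hq.symm),
            Or.inr (by rw [hq]; simp)⟩
        · refine Or.inr ⟨fun e => hs'0 (by rw [e, sub_self] at hq; exact neg_eq_zero.mp hq.symm),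
            Or.inr (by rw [hq]; simp)⟩
        · refine Or.inr ⟨fun e => hs₀0 (by rw [e, sub_self] at hq; exact hq.symm),
            Or.inr (by rw [hq]; simp)⟩
    exact (existsUnique_congr equiv).mp (hD v)
  have exu' : ∀ v : G, ∃ c : G, (c ∈ D ∧
      (v - c = 0 ∨ v - c = s ∨ v - c = -s ∨ v - c = s' ∨ v - c = -s' ∨ v - c = s₀)) ∧
      ∀ y : G, (y ∈ D ∧
      (v - y = 0 ∨ v - y = s ∨ v - y = -s ∨ v - y = s' ∨ v - y = -s' ∨ v - y = s₀)) → y = c :=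
    fun v => exu v
  choose E hEDX hu using exu'
  have hED : ∀ v : G, E v ∈ D := fun v => (hEDX v).1
  have hEX : ∀ v : G, v - E v = 0 ∨ v - E v = s ∨ v - E v = -s ∨ v - E v = s' ∨
      v - E v = -s' ∨ v - E v = s₀ := fun v => (hEDX v).2
  -- hED : ∀ v, E v ∈ D ; hEX : ∀ v, Xd (v - E v) ; hu : ∀ v y, (y ∈ D ∧ Xd (v - y)) → y = E v
  -- value lemma
  have psival : ∀ (vv c τ : G), c ∈ D → vv - c = τ →
      (τ = 0 ∨ τ = s ∨ τ = -s ∨ τ = s' ∨ τ = -s' ∨ τ = s₀) →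
      psi s s' E vv = wfun s s' τ := by
    intro vv c τ hc hvc hX
    have hc' : c = E vv := hu vv c ⟨hc, by rw [hvc]; exact hX⟩
    rw [psi_def, ← hc', hvc]
  -- D is closed under subtracting t = s + s' + s₀
  have hsub : ∀ g ∈ D, g - (s + s' + s₀) ∈ D := by
    have himg : (fun g => g + (s + s' + s₀)) '' D = D := by
      apply Set.eq_of_subset_of_ncard_le
      · rintro _ ⟨x, hx, rfl⟩
        have := hshift x hx
        simpa [add_assoc] using this
      · rw [Set.ncard_image_of_injective _ (add_left_injective _)]
      · exact Set.toFinite D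
    intro g hg
    rw [← himg] at hg
    obtain ⟨x, hxD, hx⟩ := hg
    have hx' : x + (s + s' + s₀) = g := hx
    have : g - (s + s' + s₀) = x := by rw [← hx']; abel
    rw [this]; exact hxD
  -- uniqueness clash helper
  have clash : ∀ (p c1 c2 : G), c1 ∈ D → c2 ∈ D →
      (p - c1 = 0 ∨ p - c1 = s ∨ p - c1 = -s ∨ p - c1 = s' ∨ p - c1 = -s' ∨ p - c1 = s₀) →
      (p - c2 = 0 ∨ p - c2 = s ∨ p - c2 = -s ∨ p - c2 = s' ∨ p - c2 = -s' ∨ p - c2 = s₀) →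
      c1 = c2 := by
    intro p c1 c2 h1 h2 hX1 hX2
    rw [hu p c1 ⟨h1, hX1⟩, hu p c2 ⟨h2, hX2⟩]
  -- the t-step
  have stept : ∀ v : G, psi s s' E (v + s + s' + s₀) = psi s s' E v := by
    intro v
    rw [psival (v + s + s' + s₀) (E v + s + s' + s₀) (v - E v) (hshift (E v) (hED v))
        (by abel) (hEX v),
      psival v (E v) (v - E v) (hED v) rfl (hEX v)]
  -- the s₀-step
  have step₀ : ∀ v : G, psi s s' E (v + s₀) = psi s s' E v := by
    intro v
    have hdv : E v = v - (v - E v) := by abel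
    rcases hEX v with hx|hx|hx|hx|hx|hx
    all_goals rw [hx] at hdv
    all_goals rw [psival v (E v) _ (hED v) rfl (by rw [hx]; tauto), hx]
    · -- x = 0
      have h1 : (v + s₀) - E v = s₀ := by rw [hdv]; abel
      rw [psival (v + s₀) (E v) s₀ (hED v) h1 (by tauto), ws₀, wzero]
    · -- x = s
      have h1 : (v + s₀) - (E v + s + s' + s₀) = -s' := by rw [hdv]; abel
      rw [psival (v + s₀) (E v + s + s' + s₀) (-s') (hshift (E v) (hED v)) h1 (by tauto),
        wns', ws]
    · -- x = -s
      have h1 : (v + s₀) - (E v - (s + s' + s₀)) = s' + (s₀ + s₀) := by rw [hdv]; abel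
      rw [h2s₀, add_zero] at h1
      rw [psival (v + s₀) (E v - (s + s' + s₀)) s' (hsub (E v) (hED v)) h1 (by tauto),
        ws', wns]
    · -- x = s'
      have h1 : (v + s₀) - (E v + s + s' + s₀) = -s := by rw [hdv]; abel
      rw [psival (v + s₀) (E v + s + s' + s₀) (-s) (hshift (E v) (hED v)) h1 (by tauto),
        wns, ws']
    · -- x = -s'
      have h1 : (v + s₀) - (E v - (s + s' + s₀)) = s + (s₀ + s₀) := by rw [hdv]; abel
      rw [h2s₀, add_zero] at h1
      rw [psival (v + s₀) (E v - (s + s' + s₀)) s (hsub (E v) (hED v)) h1 (by tauto),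
        ws, wns']
    · -- x = s₀
      have h1 : (v + s₀) - E v = s₀ + s₀ := by rw [hdv]; abel
      rw [h2s₀] at h1
      rw [psival (v + s₀) (E v) 0 (hED v) h1 (by tauto), wzero, ws₀]
  -- the s'-step
  have step' : ∀ v : G, psi s s' E (v + s') = psi s s' E v + 1 := by
    intro v
    have hdv : E v = v - (v - E v) := by abel
    rcases hEX v with hx|hx|hx|hx|hx|hx
    all_goals rw [hx] at hdv
    all_goals rw [psival v (E v) _ (hED v) rfl (by rw [hx]; tauto), hx]
    · -- x = 0
      have h1 : (v + s') - E v = s' := by rw [hdv]; abel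
      rw [psival (v + s') (E v) s' (hED v) h1 (by tauto), ws', wzero]
      decide
    · -- x = s
      have h1 : (v + s') - (E v + s + s' + s₀) = -s₀ := by rw [hdv]; abel
      rw [hns₀] at h1
      rw [psival (v + s') (E v + s + s' + s₀) s₀ (hshift (E v) (hED v)) h1 (by tauto),
        ws₀, ws]
      decide
    · -- x = -s : Lemma C
      have hd'eq : E (v + s') = (v + s') - ((v + s') - E (v + s')) := by abel
      rcases hEX (v + s') with hx'|hx'|hx'|hx'|hx'|hx'
      all_goals rw [hx'] at hd'eq
      · -- τ' = 0 : contradiction, E(v+s') = v + s'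
        exfalso
        have q1 : E (v + s') = E v := by
          apply clash v _ _ (hED (v + s')) (hED v)
          · right; right; right; right; left; rw [hd'eq]; abel
          · right; right; left; exact hx
        rw [hd'eq, hdv] at q1
        have q2 : s - s' = 0 := ezh q1 (by abel)
        exact hss' (sub_eq_zero.mp q2).symm
      · -- τ' = s : OK
        rw [psival (v + s') (E (v + s')) s (hED (v + s')) hx' (by tauto), ws, wns]
        decide
      · -- τ' = -s : contradiction, E(v+s') = v + s' + s = E v + s'
        exfalso
        have q1 : E (v + s') = E v := by
          apply clash (v + s' + s) _ _ (hED (v + s')) (hED v)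
          · left; rw [hd'eq]; abel
          · right; right; right; left; rw [hdv]; abel
        rw [hd'eq, hdv] at q1
        have q2 : -s' = 0 := ezh q1 (by abel)
        exact hs'0 (neg_eq_zero.mp q2)
      · -- τ' = s' : contradiction, E(v+s') = v
        exfalso
        have q1 : E (v + s') = E v := by
          apply clash v _ _ (hED (v + s')) (hED v)
          · left; rw [hd'eq]; abel
          · right; right; left; exact hx
        rw [hd'eq, hdv] at q1
        have q2 : s = 0 := ezh q1 (by abel)
        exact hs0 q2
      · -- τ' = -s' : OK
        rw [psival (v + s') (E (v + s')) (-s') (hED (v + s')) hx' (by tauto), wns', wns]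
        decide
      · -- τ' = s₀ : contradiction with E v + t
        exfalso
        have hq1 : (v + s + s' + s₀) - E (v + s') = s + (s₀ + s₀) := by rw [hd'eq]; abel
        rw [h2s₀, add_zero] at hq1
        have q1 : E (v + s') = E v + s + s' + s₀ := by
          apply clash (v + s + s' + s₀) _ _ (hED (v + s')) (hshift (E v) (hED v))
          · right; left; exact hq1
          · right; right; left; rw [hdv]; abel
        rw [hd'eq, hdv] at q1
        have q2 : s + s + (s₀ + s₀) = 0 := ezh q1 (by abel)
        rw [h2s₀, add_zero] at q2
        exact h2s q2
    · -- x = s' : Lemma B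
      have hd'eq : E (v + s') = (v + s') - ((v + s') - E (v + s')) := by abel
      rcases hEX (v + s') with hx'|hx'|hx'|hx'|hx'|hx'
      all_goals rw [hx'] at hd'eq
      · -- τ' = 0 : contradiction
        exfalso
        have q1 : E (v + s') = E v := by
          apply clash v _ _ (hED (v + s')) (hED v)
          · right; right; right; right; left; rw [hd'eq]; abel
          · right; right; right; left; exact hx
        rw [hd'eq, hdv] at q1
        have q2 : -(s' + s') = 0 := ezh q1 (by abel)
        exact h2s' (neg_eq_zero.mp q2)
      · -- τ' = s : OK
        rw [psival (v + s') (E (v + s')) s (hED (v + s')) hx' (by tauto), ws, ws']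
        decide
      · -- τ' = -s : contradiction with E v + t
        exfalso
        have hq2 : (v + s) - (E v + s + s' + s₀) = -s₀ := by rw [hdv]; abel
        rw [hns₀] at hq2
        have q1 : E (v + s') = E v + s + s' + s₀ := by
          apply clash (v + s) _ _ (hED (v + s')) (hshift (E v) (hED v))
          · right; right; right; right; left; rw [hd'eq]; abel
          · right; right; right; right; right; exact hq2
        rw [hd'eq, hdv] at q1
        have q2 : s₀ - s' = 0 := ezh q1 (by abel)
        exact hs's₀ (sub_eq_zero.mp q2).symm
      · -- τ' = s' : contradiction
        exfalso
        have q1 : E (v + s') = E v := by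
          apply clash v _ _ (hED (v + s')) (hED v)
          · left; rw [hd'eq]; abel
          · right; right; right; left; exact hx
        rw [hd'eq, hdv] at q1
        have q2 : -s' = 0 := ezh q1 (by abel)
        exact hs'0 (neg_eq_zero.mp q2)
      · -- τ' = -s' : OK
        rw [psival (v + s') (E (v + s')) (-s') (hED (v + s')) hx' (by tauto), wns', ws']
        decide
      · -- τ' = s₀ : contradiction with E v + t
        exfalso
        have hq1 : (v + s₀) - E (v + s') = -s' + (s₀ + s₀) := by rw [hd'eq]; abel
        rw [h2s₀, add_zero] at hq1
        have q1 : E (v + s') = E v + s + s' + s₀ := by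
          apply clash (v + s₀) _ _ (hED (v + s')) (hshift (E v) (hED v))
          · right; right; right; right; left; exact hq1
          · right; right; left; rw [hdv]; abel
        rw [hd'eq, hdv] at q1
        have q2 : (s - s') + (s₀ + s₀) = 0 := ezh q1 (by abel)
        rw [h2s₀, add_zero] at q2
        exact hss' (sub_eq_zero.mp q2).symm
    · -- x = -s'
      have h1 : (v + s') - E v = 0 := by rw [hdv]; abel
      rw [psival (v + s') (E v) 0 (hED v) h1 (by tauto), wzero, wns']
      decide
    · -- x = s₀
      have h1 : (v + s') - (E v + s + s' + s₀) = -s := by rw [hdv]; abel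
      rw [psival (v + s') (E v + s + s' + s₀) (-s) (hshift (E v) (hED v)) h1 (by tauto),
        wns, ws₀]
      decide
  -- the s-step
  have steps : ∀ v : G, psi s s' E (v + s) = psi s s' E v - 1 := by
    intro v
    have h1 := stept v
    have h2 := step' (v + s)
    have h3 := step₀ (v + s + s')
    rw [h3, h2] at h1
    rw [← h1]; ring
  -- iteration
  have iters : ∀ (n : ℤ) (v : G), psi s s' E (v + n • s) = psi s s' E v - (n : ZMod 3) := by
    intro n
    induction n using Int.induction_on with
    | zero => intro v; simp
    | succ k ih =>
      intro v
      have e1 : v + ((k : ℤ) + 1) • s = v + (k : ℤ) • s + s := by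
        rw [add_zsmul, one_zsmul, ← add_assoc]
      rw [e1, steps, ih]
      push_cast
      ring
    | pred k ih =>
      intro v
      have e1 : v + (-(k : ℤ) - 1) • s = v + (-(k : ℤ)) • s - s := by
        rw [show (-(k : ℤ) - 1) = -(k : ℤ) + (-1) by ring, add_zsmul]
        rw [show ((-1 : ℤ) • s) = -s from neg_one_zsmul s]
        abel
      have h2 := steps (v + (-(k : ℤ)) • s - s)
      rw [show v + (-(k : ℤ)) • s - s + s = v + (-(k : ℤ)) • s from by abel] at h2
      rw [e1, show psi s s' E (v + (-(k : ℤ)) • s - s)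
          = psi s s' E (v + (-(k : ℤ)) • s) + 1 from by rw [h2]; ring, ih]
      push_cast
      ring
  have iters' : ∀ (n : ℤ) (v : G), psi s s' E (v + n • s') = psi s s' E v + (n : ZMod 3) := by
    intro n
    induction n using Int.induction_on with
    | zero => intro v; simp
    | succ k ih =>
      intro v
      have e1 : v + ((k : ℤ) + 1) • s' = v + (k : ℤ) • s' + s' := by
        rw [add_zsmul, one_zsmul, ← add_assoc]
      rw [e1, step', ih]
      push_cast
      ring
    | pred k ih =>
      intro v
      have e1 : v + (-(k : ℤ) - 1) • s' = v + (-(k : ℤ)) • s' - s' := by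
        rw [show (-(k : ℤ) - 1) = -(k : ℤ) + (-1) by ring, add_zsmul]
        rw [show ((-1 : ℤ) • s') = -s' from neg_one_zsmul s']
        abel
      have h2 := step' (v + (-(k : ℤ)) • s' - s')
      rw [show v + (-(k : ℤ)) • s' - s' + s' = v + (-(k : ℤ)) • s' from by abel] at h2
      rw [e1, show psi s s' E (v + (-(k : ℤ)) • s' - s')
          = psi s s' E (v + (-(k : ℤ)) • s') - 1 from by rw [h2]; ring, ih]
      push_cast
      ring
  -- conclude
  have e1 := iters h (0 : G)
  have e2 := iters' l ((0 : G) + h • s)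
  rw [e1] at e2
  rw [show (0 : G) + h • s + l • s' = 0 from by rw [zero_add, hrel]] at e2
  have e4 : ((l - h : ℤ) : ZMod 3) = 0 := by push_cast; linear_combination -e2
  exact (ZMod.intCast_zmod_eq_zero_iff_dvd (l - h) 3).mp e4

theorem stmt5 (G : Type*) [AddCommGroup G] [Fintype G] (s s' s₀ : G)
    (h5 : ({s, -s, s', -s', s₀} : Set G).ncard = 5)
    (h0 : addOrderOf s₀ = 2) (hs : 2 < addOrderOf s) (hs' : 2 < addOrderOf s')
    (hgen : AddSubgroup.closure ({s, -s, s', -s', s₀} : Set G) = ⊤)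
    (D : Set G)
    (hD : IsPerfectCode (cayley G ({s, -s, s', -s', s₀} : Set G)) D)
    (a : ℤ) (ha : a = 1 ∨ a = -1)
    (hshift : ∀ g ∈ D, g + a • s + s' + s₀ ∈ D)
    (h l : ℤ) (hh0 : 0 ≤ h) (hhm : h ≤ (addOrderOf s : ℤ))
    (hl0 : 0 ≤ l) (hlm : l ≤ (addOrderOf s' : ℤ))
    (hrel : h • s + l • s' = 0) :
    (3 : ℤ) ∣ (l - a * h) := by
  rcases ha with rfl | rfl
  · have hsh : ∀ g ∈ D, g + s + s' + s₀ ∈ D := by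
      intro g hg
      have := hshift g hg
      rwa [one_zsmul] at this
    have := key G s s' s₀ h5 h0 hs hs' D hD hsh h l hrel
    rw [show l - 1 * h = l - h by ring]
    exact this
  · have hset : ({-s, -(-s), s', -s', s₀} : Set G) = ({s, -s, s', -s', s₀} : Set G) := by
      rw [neg_neg]
      exact Set.insert_comm _ _ _
    have hsh : ∀ g ∈ D, g + (-s) + s' + s₀ ∈ D := by
      intro g hg
      have := hshift g hg
      rwa [show (-1 : ℤ) • s = -s from by simp] at this
    have hrel' : (-h) • (-s) + l • s' = 0 := by
      rw [show (-h) • (-s) = h • s from by simp]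
      exact hrel
    have := key G (-s) s' s₀ (by rw [hset]; exact h5) h0 (by rwa [addOrderOf_neg]) hs' D
      (by rw [hset]; exact hD) hsh (-h) l hrel'
    rw [show l - (-1) * h = l - (-h) by ring]
    exact this
end

section
/- Let Cay(G,S) be a connected quintic Cayley graph on a finite abelian group with S = {s, -s, s', -s', s₀}, s₀ an involution, o(s), o(s') > 2, admitting a perfect code, and suppose s₀ = (o(s)/2)·s + (o(s')/2)·s' (with o(s), o(s') both even). Then σ(o(s)) ≠ σ(o(s')) or σ(o(s)) = σ(o(s')) = 1. -/
private lemma stmt14_ncard_le_four {G : Type*} (a b c d : G) :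
    ({a, b, c, d} : Set G).ncard ≤ 4 := by
  have h1 := Set.ncard_insert_le a ({b, c, d} : Set G)
  have h2 := Set.ncard_insert_le b ({c, d} : Set G)
  have h3 := Set.ncard_insert_le c ({d} : Set G)
  have h4 : ({d} : Set G).ncard = 1 := Set.ncard_singleton d
  omega

private lemma stmt14_alt {G : Type*} [AddCommGroup G] (h : G → ℤ) (z : G)
    (hrec : ∀ g, h (g + z) = - h g) : ∀ (t : ℕ) (g : G), h (g + t • z) = (-1) ^ t * h g := by
  intro t
  induction t with
  | zero => intro g; simp
  | succ t ih =>
    intro g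
    rw [succ_nsmul, ← add_assoc, hrec, ih, pow_succ]
    ring

set_option maxHeartbeats 2000000 in
theorem stmt14 (G : Type*) [AddCommGroup G] [Fintype G] (s s' s₀ : G)
    (h5 : ({s, -s, s', -s', s₀} : Set G).ncard = 5)
    (h0 : addOrderOf s₀ = 2) (hs : 2 < addOrderOf s) (hs' : 2 < addOrderOf s')
    (hgen : AddSubgroup.closure ({s, -s, s', -s', s₀} : Set G) = ⊤)
    (D : Set G)
    (hD : IsPerfectCode (cayley G ({s, -s, s', -s', s₀} : Set G)) D)
    (he : 2 ∣ addOrderOf s) (he' : 2 ∣ addOrderOf s')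
    (hs0 : s₀ = (addOrderOf s / 2) • s + (addOrderOf s' / 2) • s') :
    sigma2 (addOrderOf s) ≠ sigma2 (addOrderOf s') ∨
      (sigma2 (addOrderOf s) = 1 ∧ sigma2 (addOrderOf s') = 1) := by
  classical
  by_cases hkk : sigma2 (addOrderOf s) = sigma2 (addOrderOf s')
  swap
  · exact Or.inl hkk
  by_cases hone : sigma2 (addOrderOf s) = 1
  · exact Or.inr ⟨hone, hkk ▸ hone⟩
  exfalso
  simp only [sigma2] at hkk hone
  -- basic nonzeroness facts
  have hsne : s ≠ 0 := by
    intro h; rw [h, addOrderOf_zero] at hs; omega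
  have hs'ne : s' ≠ 0 := by
    intro h; rw [h, addOrderOf_zero] at hs'; omega
  have hs0ne : s₀ ≠ 0 := by
    intro h; rw [h, addOrderOf_zero] at h0; omega
  have hsns : s ≠ -s := by
    intro hcontra
    have h2 : (2 : ℕ) • s = 0 := by
      rw [two_nsmul]
      nth_rewrite 2 [hcontra]
      simp
    have hdvd := addOrderOf_dvd_of_nsmul_eq_zero h2
    have := Nat.le_of_dvd (by norm_num) hdvd
    omega
  have hs'ns' : s' ≠ -s' := by
    intro hcontra
    have h2 : (2 : ℕ) • s' = 0 := by
      rw [two_nsmul]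
      nth_rewrite 2 [hcontra]
      simp
    have hdvd := addOrderOf_dvd_of_nsmul_eq_zero h2
    have := Nat.le_of_dvd (by norm_num) hdvd
    omega
  -- pairwise distinctness from h5
  have collapse : ∀ x y z w : G, ({s, -s, s', -s', s₀} : Set G) ⊆ {x, y, z, w} → False := by
    intro x y z w hsub
    have h4 := Set.ncard_le_ncard hsub (Set.toFinite _)
    have h4' := stmt14_ncard_le_four x y z w
    omega
  have h_ss' : s ≠ s' := by
    intro hcontra
    refine collapse (-s) s' (-s') s₀ ?_
    intro t ht
    simp only [Set.mem_insert_iff, Set.mem_singleton_iff] at ht ⊢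
    rcases ht with h | h | h | h | h <;> subst h <;> tauto
  have h_snegs' : s ≠ -s' := by
    intro hcontra
    refine collapse (-s) s' (-s') s₀ ?_
    intro t ht
    simp only [Set.mem_insert_iff, Set.mem_singleton_iff] at ht ⊢
    rcases ht with h | h | h | h | h <;> subst h <;> tauto
  have h_ss0 : s ≠ s₀ := by
    intro hcontra
    refine collapse (-s) s' (-s') s₀ ?_
    intro t ht
    simp only [Set.mem_insert_iff, Set.mem_singleton_iff] at ht ⊢
    rcases ht with h | h | h | h | h <;> subst h <;> tauto
  have h_negs_s0 : -s ≠ s₀ := by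
    intro hcontra
    refine collapse s s' (-s') s₀ ?_
    intro t ht
    simp only [Set.mem_insert_iff, Set.mem_singleton_iff] at ht ⊢
    rcases ht with h | h | h | h | h <;> subst h <;> tauto
  have h_s's0 : s' ≠ s₀ := by
    intro hcontra
    refine collapse s (-s) (-s') s₀ ?_
    intro t ht
    simp only [Set.mem_insert_iff, Set.mem_singleton_iff] at ht ⊢
    rcases ht with h | h | h | h | h <;> subst h <;> tauto
  have h_negs'_s0 : -s' ≠ s₀ := by
    intro hcontra
    refine collapse s (-s) s' s₀ ?_
    intro t ht
    simp only [Set.mem_insert_iff, Set.mem_singleton_iff] at ht ⊢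
    rcases ht with h | h | h | h | h <;> subst h <;> tauto
  have h_negs_s' : -s ≠ s' := by
    intro h
    exact h_snegs' (by rw [← h, neg_neg])
  have h_negs_negs' : -s ≠ -s' := fun h => h_ss' (neg_injective h)
  -- arithmetic setup
  set n := addOrderOf s with hn_def
  set n' := addOrderOf s' with hn'_def
  set k := padicValNat 2 n with hk_def
  have hkk' : padicValNat 2 n' = k := hkk.symm
  have hn0 : n ≠ 0 := by omega
  have hn'0 : n' ≠ 0 := by omega
  haveI : Fact (Nat.Prime 2) := Fact.mk Nat.prime_two
  have hk1 : 1 ≤ k := one_le_padicValNat_of_dvd hn0 he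
  have hk2 : 2 ≤ k := by omega
  set N := n / 2 with hN_def
  set N' := n' / 2 with hN'_def
  have hnN : n = 2 * N := by omega
  have hn'N' : n' = 2 * N' := by omega
  have hpow_dvd : 2 ^ k ∣ n := pow_padicValNat_dvd
  have hpow_dvd' : 2 ^ k ∣ n' := by rw [← hkk']; exact pow_padicValNat_dvd
  have h4n : (4 : ℕ) ∣ n := by
    refine dvd_trans ?_ hpow_dvd
    have : (2 : ℕ) ^ 2 ∣ 2 ^ k := pow_dvd_pow 2 hk2
    simpa using this
  have hNeven : 2 ∣ N := by omega
  obtain ⟨a, hna⟩ := hpow_dvd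
  obtain ⟨a', hna'⟩ := hpow_dvd'
  have haodd : ¬ 2 ∣ a := by
    intro hdvd
    obtain ⟨b, hb⟩ := hdvd
    have hdd : 2 ^ (k + 1) ∣ n := ⟨b, by rw [hna, hb]; ring⟩
    have hle := (Nat.Prime.pow_dvd_iff_le_factorization Nat.prime_two hn0).mp hdd
    rw [Nat.factorization_def n Nat.prime_two] at hle
    omega
  have ha'odd : ¬ 2 ∣ a' := by
    intro hdvd
    obtain ⟨b, hb⟩ := hdvd
    have hdd : 2 ^ (k + 1) ∣ n' := ⟨b, by rw [hna', hb]; ring⟩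
    have hle := (Nat.Prime.pow_dvd_iff_le_factorization Nat.prime_two hn'0).mp hdd
    rw [Nat.factorization_def n' Nat.prime_two, hkk'] at hle
    omega
  set d := Nat.gcd a a' with hd_def
  have hgcd : Nat.gcd n n' = 2 ^ k * d := by rw [hna, hna', Nat.gcd_mul_left]
  have hdodd : ¬ 2 ∣ d := fun h => haodd (h.trans (Nat.gcd_dvd_left a a'))
  have hcrt : N ≡ N' [MOD Nat.gcd n n'] := by
    rw [Nat.modEq_iff_dvd]
    obtain ⟨b, hb⟩ : Even ((a' : ℤ) - (a : ℤ)) := by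
      obtain ⟨w, hw⟩ : ∃ w, a' = 2 * w + 1 := ⟨a' / 2, by omega⟩
      obtain ⟨w', hw'⟩ : ∃ w', a = 2 * w' + 1 := ⟨a / 2, by omega⟩
      exact Odd.sub_odd ⟨w, by exact_mod_cast hw⟩ ⟨w', by exact_mod_cast hw'⟩
    have hdvd_b : (d : ℤ) ∣ b := by
      have h2b : (d : ℤ) ∣ 2 * b := by
        have h1 : (d : ℤ) ∣ (a' : ℤ) - a :=
          dvd_sub (Int.natCast_dvd_natCast.mpr (Nat.gcd_dvd_right a a'))
            (Int.natCast_dvd_natCast.mpr (Nat.gcd_dvd_left a a'))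
        rw [hb] at h1
        simpa [two_mul] using h1
      have hcop : IsCoprime (d : ℤ) 2 := by
        rw [Int.isCoprime_iff_gcd_eq_one]
        have hcast : Int.gcd (d : ℤ) 2 = Nat.gcd d 2 := by norm_cast
        rw [hcast]
        rcases (Nat.dvd_prime Nat.prime_two).mp (Nat.gcd_dvd_right d 2) with h | h
        · exact h
        · exact absurd (h ▸ Nat.gcd_dvd_left d 2) hdodd
      exact hcop.dvd_of_dvd_mul_left h2b
    have hNN' : (N' : ℤ) - N = 2 ^ k * b := by
      have e1 : (n : ℤ) = 2 * N := by exact_mod_cast hnN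
      have e2 : (n' : ℤ) = 2 * N' := by exact_mod_cast hn'N'
      have e3 : (n : ℤ) = 2 ^ k * a := by exact_mod_cast hna
      have e4 : (n' : ℤ) = 2 ^ k * a' := by exact_mod_cast hna'
      have h2 : (2 : ℤ) * ((N' : ℤ) - N) = 2 * (2 ^ k * b) :=
        calc (2 : ℤ) * ((N' : ℤ) - N) = (n' : ℤ) - n := by rw [e1, e2]; ring
          _ = 2 ^ k * ((a' : ℤ) - a) := by rw [e3, e4]; ring
          _ = 2 * (2 ^ k * b) := by rw [hb]; ring
      exact mul_left_cancel₀ two_ne_zero h2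
    rw [hgcd]
    push_cast
    rw [hNN']
    exact mul_dvd_mul_left _ hdvd_b
  obtain ⟨m, hm1, hm2⟩ := Nat.chineseRemainder' hcrt
  have hms : m • s = N • s := nsmul_eq_nsmul_iff_modEq.mpr hm1
  have hms' : m • s' = N' • s' := nsmul_eq_nsmul_iff_modEq.mpr hm2
  have hmeven : 2 ∣ m := by
    have h2 : m % 2 = N % 2 := Nat.ModEq.of_dvd he hm1
    omega
  -- group identities
  have hss0 : s₀ + s₀ = 0 := by
    have h := addOrderOf_nsmul_eq_zero s₀
    rw [h0, two_nsmul] at h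
    exact h
  have hnegs0 : -s₀ = s₀ := neg_eq_of_add_eq_zero_left hss0
  have h2N : N • s + N • s = 0 := by
    rw [← add_nsmul]
    have hNN : N + N = n := by omega
    rw [hNN]
    exact addOrderOf_nsmul_eq_zero s
  have h2N' : N' • s' + N' • s' = 0 := by
    rw [← add_nsmul]
    have hNN : N' + N' = n' := by omega
    rw [hNN]
    exact addOrderOf_nsmul_eq_zero s'
  have hmz1 : m • (s' - s) = s₀ := by
    rw [nsmul_sub, hms, hms']
    have h : N' • s' - N • s = (N • s + N' • s') - (N • s + N • s) := by abel
    rw [h, ← hs0, h2N, sub_zero]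
  have hmz2 : m • (s + s') = s₀ := by
    rw [nsmul_add, hms, hms', ← hs0]
  -- the finite connection set
  set Afin : Finset G := {0, s, -s, s', -s', s₀} with hAfin
  have hmemA : ∀ x : G, x ∈ Afin ↔
      (x = 0 ∨ x = s ∨ x = -s ∨ x = s' ∨ x = -s' ∨ x = s₀) := by
    intro x
    rw [hAfin]
    simp [Finset.mem_insert, Finset.mem_singleton]
  -- the unique-codeword structure
  have hcode : ∀ v : G, ∃ c, (c ∈ D ∧ (v - c) ∈ Afin) ∧
      ∀ y ∈ D, (v - y) ∈ Afin → y = c := by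
    intro v
    obtain ⟨c, ⟨hcD, hcor⟩, huniq⟩ := hD v
    refine ⟨c, ⟨hcD, ?_⟩, ?_⟩
    · rw [hmemA]
      rcases hcor with heq | hadj
      · exact Or.inl (by rw [heq, sub_self])
      · have hadj' : v ≠ c ∧ (c - v ∈ ({s, -s, s', -s', s₀} : Set G) ∨
            v - c ∈ ({s, -s, s', -s', s₀} : Set G)) := hadj
        rcases hadj'.2 with hin | hin
        · simp only [Set.mem_insert_iff, Set.mem_singleton_iff] at hin
          have hvc : v - c = -(c - v) := (neg_sub c v).symm
          rcases hin with h | h | h | h | h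
          · exact Or.inr (Or.inr (Or.inl (by rw [hvc, h])))
          · exact Or.inr (Or.inl (by rw [hvc, h, neg_neg]))
          · exact Or.inr (Or.inr (Or.inr (Or.inr (Or.inl (by rw [hvc, h])))))
          · exact Or.inr (Or.inr (Or.inr (Or.inl (by rw [hvc, h, neg_neg]))))
          · exact Or.inr (Or.inr (Or.inr (Or.inr (Or.inr (by rw [hvc, h, hnegs0])))))
        · simp only [Set.mem_insert_iff, Set.mem_singleton_iff] at hin
          tauto
    · intro y hyD hyA
      rw [hmemA] at hyA
      have hS : v - y ∈ ({s, -s, s', -s', s₀} : Set G) → v - y ≠ 0 → y = c := by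
        intro hmem hne0
        refine huniq y ⟨hyD, Or.inr ?_⟩
        exact ⟨fun hvy => hne0 (by rw [hvy, sub_self]), Or.inr hmem⟩
      rcases hyA with h | h | h | h | h | h
      · exact huniq y ⟨hyD, Or.inl (sub_eq_zero.mp h)⟩
      · exact hS (by rw [h]; simp) (by rw [h]; exact hsne)
      · exact hS (by rw [h]; simp) (by rw [h]; simpa using hsne)
      · exact hS (by rw [h]; simp) (by rw [h]; exact hs'ne)
      · exact hS (by rw [h]; simp) (by rw [h]; simpa using hs'ne)
      · exact hS (by rw [h]; simp) (by rw [h]; exact hs0ne)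
  -- indicator function
  set eD : G → ℤ := fun g => if g ∈ D then 1 else 0 with heD
  have hsum : ∀ v : G, (∑ x ∈ Afin, eD (v - x)) = 1 := by
    intro v
    obtain ⟨c, ⟨hcD, hcA⟩, huni⟩ := hcode v
    have hrw : ∀ x ∈ Afin, eD (v - x) = if x = v - c then 1 else 0 := by
      intro x hx
      by_cases hxc : x = v - c
      · rw [if_pos hxc, hxc, heD]
        simp only [sub_sub_cancel]
        rw [if_pos hcD]
      · rw [if_neg hxc]
        have hnotin : v - x ∉ D := by
          intro hmem
          have heq := huni (v - x) hmem (by rwa [sub_sub_cancel])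
          exact hxc (by rw [← heq, sub_sub_cancel])
        simp [heD, hnotin]
    rw [Finset.sum_congr rfl hrw, Finset.sum_ite_eq' Afin (v - c) (fun _ => (1 : ℤ)),
      if_pos hcA]
  -- expansion of the sum
  have hnm0 : (0 : G) ∉ ({s, -s, s', -s', s₀} : Finset G) := by
    simp only [Finset.mem_insert, Finset.mem_singleton]
    push_neg
    exact ⟨fun h => hsne h.symm, fun h => hsne (neg_eq_zero.mp h.symm),
      fun h => hs'ne h.symm, fun h => hs'ne (neg_eq_zero.mp h.symm), fun h => hs0ne h.symm⟩
  have hnm1 : s ∉ ({-s, s', -s', s₀} : Finset G) := by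
    simp only [Finset.mem_insert, Finset.mem_singleton]
    push_neg
    exact ⟨hsns, h_ss', h_snegs', h_ss0⟩
  have hnm2 : -s ∉ ({s', -s', s₀} : Finset G) := by
    simp only [Finset.mem_insert, Finset.mem_singleton]
    push_neg
    exact ⟨h_negs_s', h_negs_negs', h_negs_s0⟩
  have hnm3 : s' ∉ ({-s', s₀} : Finset G) := by
    simp only [Finset.mem_insert, Finset.mem_singleton]
    push_neg
    exact ⟨hs'ns', h_s's0⟩
  have hnm4 : -s' ∉ ({s₀} : Finset G) := by
    simp only [Finset.mem_singleton]
    exact h_negs'_s0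
  have hexpand : ∀ h : G → ℤ,
      (∑ x ∈ Afin, h x) = h 0 + h s + h (-s) + h s' + h (-s') + h s₀ := by
    intro h
    rw [hAfin]
    rw [Finset.sum_insert hnm0, Finset.sum_insert hnm1, Finset.sum_insert hnm2,
      Finset.sum_insert hnm3, Finset.sum_insert hnm4, Finset.sum_singleton]
    ring
  have hsum6 : ∀ v : G,
      eD v + eD (v - s) + eD (v + s) + eD (v - s') + eD (v + s') + eD (v - s₀) = 1 := by
    intro v
    have h := hsum v
    rw [hexpand (fun x => eD (v - x))] at h
    simpa [sub_zero, sub_neg_eq_add] using h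
  -- the difference function
  set f : G → ℤ := fun g => eD g - eD (g + s₀) with hf
  have hgsub : ∀ g : G, g - s₀ = g + s₀ := fun g => by rw [sub_eq_add_neg, hnegs0]
  have hcancel : ∀ g : G, g + s₀ + s₀ = g := fun g => by rw [add_assoc, hss0, add_zero]
  have hf_anti : ∀ g : G, f (g + s₀) = - f g := by
    intro g
    simp only [hf]
    rw [hcancel g]
    ring
  have hE : ∀ v : G, f (v - s) + f (v + s) + f (v - s') + f (v + s') = 0 := by
    intro v
    have h1 := hsum6 v
    have h2 := hsum6 (v + s₀)
    rw [hgsub v] at h1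
    rw [hgsub (v + s₀), hcancel v] at h2
    have e1 : v + s₀ - s = v - s + s₀ := by abel
    have e2 : v + s₀ + s = v + s + s₀ := by abel
    have e3 : v + s₀ - s' = v - s' + s₀ := by abel
    have e4 : v + s₀ + s' = v + s' + s₀ := by abel
    rw [e1, e2, e3, e4] at h2
    simp only [hf]
    linarith
  -- the auxiliary function f₁
  set f₁ : G → ℤ := fun g => f g + f (g + (s + s')) with hf₁
  have hbase : ∀ v : G, f₁ (v - s) + f₁ (v - s') = 0 := by
    intro v
    simp only [hf₁]
    have e1 : v - s + (s + s') = v + s' := by abel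
    have e2 : v - s' + (s + s') = v + s := by abel
    rw [e1, e2]
    linarith [hE v]
  have hf₁rec : ∀ g : G, f₁ (g + (s' - s)) = - f₁ g := by
    intro g
    have h := hbase (g + s')
    have e1 : g + s' - s = g + (s' - s) := by abel
    have e2 : g + s' - s' = g := by abel
    rw [e1, e2] at h
    linarith
  have hf₁anti : ∀ g : G, f₁ (g + s₀) = - f₁ g := by
    intro g
    simp only [hf₁]
    have e : g + s₀ + (s + s') = g + (s + s') + s₀ := by abel
    rw [e, hf_anti, hf_anti]
    ring
  obtain ⟨mo, hmo⟩ := hmeven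
  have hmEven : Even m := ⟨mo, by omega⟩
  have hneg1m : ((-1 : ℤ)) ^ m = 1 := Even.neg_one_pow hmEven
  have hf₁zero : ∀ g : G, f₁ g = 0 := by
    intro g
    have h1 := stmt14_alt f₁ (s' - s) hf₁rec m g
    rw [hmz1, hneg1m, one_mul] at h1
    have h2 := hf₁anti g
    linarith
  have hfrec : ∀ g : G, f (g + (s + s')) = - f g := by
    intro g
    have h := hf₁zero g
    simp only [hf₁] at h
    linarith
  have hfzero : ∀ g : G, f g = 0 := by
    intro g
    have h1 := stmt14_alt f (s + s') hfrec m g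
    rw [hmz2, hneg1m, one_mul] at h1
    have h2 := hf_anti g
    linarith
  -- D is s₀-periodic: contradiction
  have hper : ∀ g : G, g ∈ D → (g + s₀) ∈ D := by
    intro g hg
    have h := hfzero g
    simp only [hf, heD] at h
    rw [if_pos hg] at h
    by_contra hnot
    rw [if_neg hnot] at h
    omega
  obtain ⟨c0, ⟨hc0D, _⟩, _⟩ := hD 0
  obtain ⟨c, hc, huniq⟩ := hD c0
  have e1 : c0 = c := huniq c0 ⟨hc0D, Or.inl rfl⟩
  have e2 : c0 + s₀ = c := by
    refine huniq (c0 + s₀) ⟨hper c0 hc0D, Or.inr ⟨?_, Or.inl ?_⟩⟩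
    · intro hcontra
      exact hs0ne (left_eq_add.mp hcontra)
    · rw [add_sub_cancel_left]
      simp
  have : c0 + s₀ = c0 := e2.trans e1.symm
  exact hs0ne (add_eq_left.mp this)
end

section
/- Let Cay(G,S) be a connected quintic Cayley graph on a finite abelian group admitting a perfect code, with S = {s, -s, s', -s', s₀}, s₀ an involution, and o(s), o(s') > 2. Then 3 divides both o(s) and o(s'). -/
open Finset in
theorem key_aux {G : Type*} [AddCommGroup G] [Fintype G] (s s' s₀ : G) (D : Set G)
    (h0 : addOrderOf s₀ = 2)
    (hnd : ([0, s, -s, s', -s', s₀] : List G).Nodup)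
    (htile : ∀ g : G, ∃! td : G × G,
      (td.1 = 0 ∨ td.1 = s ∨ td.1 = -s ∨ td.1 = s' ∨ td.1 = -s' ∨ td.1 = s₀) ∧
      td.2 ∈ D ∧ g = td.1 + td.2) :
    3 ∣ addOrderOf s := by
  classical
  by_contra h3
  set v := (Fintype.card G).factorization 3 with hv
  set q := Fintype.card G / 3 ^ v with hq
  have hcard0 : Fintype.card G ≠ 0 := Fintype.card_ne_zero
  have hqs : Fintype.card G = 3 ^ v * q := (Nat.ordProj_mul_ordCompl_eq_self _ 3).symm
  have hdvdq : ∀ g : G, ¬ 3 ∣ addOrderOf g → q • g = 0 := by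
    intro g hg
    have h1 : addOrderOf g ∣ 3 ^ v * q := hqs ▸ addOrderOf_dvd_card
    have hcop : Nat.Coprime (addOrderOf g) (3 ^ v) :=
      (((Nat.Prime.coprime_iff_not_dvd Nat.prime_three).mpr hg).pow_left v).symm
    exact addOrderOf_dvd_iff_nsmul_eq_zero.mp (hcop.dvd_of_dvd_mul_left h1)
  have hπs : q • s = 0 := hdvdq s h3
  have hπs₀ : q • s₀ = 0 := hdvdq s₀ (by rw [h0]; decide)
  set n : G → ℕ := fun x => (univ.filter (fun d : G => d ∈ D ∧ q • d = q • x)).card with hn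
  set c₀ : ℕ := (univ.filter (fun g : G => q • g = 0)).card with hc₀
  have hfiber : ∀ x : G, (univ.filter (fun g : G => q • g = q • x)).card = c₀ := by
    intro x
    rw [hc₀]
    apply Finset.card_bij' (fun g _ => g - x) (fun g _ => g + x)
    · intro a ha
      simp only [mem_filter, mem_univ, true_and] at ha ⊢
      rw [smul_sub, ha, sub_self]
    · intro a ha
      simp only [mem_filter, mem_univ, true_and] at ha ⊢
      rw [smul_add, ha, zero_add]
    · intro a _; exact sub_add_cancel a x
    · intro a _; exact add_sub_cancel_right a x
  have hmain : ∀ x : G, c₀ = 4 * n x + n (x - s') + n (x + s') := by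
    intro x
    set T : Finset G := {0, s, -s, s', -s', s₀} with hT
    have hTmem : ∀ t : G, t ∈ T ↔
        (t = 0 ∨ t = s ∨ t = -s ∨ t = s' ∨ t = -s' ∨ t = s₀) := by
      intro t; simp [hT]
    have hbij : (T.sigma (fun t => univ.filter
          (fun d : G => d ∈ D ∧ q • d = q • x - q • t))).card =
        (univ.filter (fun g : G => q • g = q • x)).card := by
      apply Finset.card_bij (fun p _ => p.1 + p.2)
      · intro p hp
        obtain ⟨hpT, hpD⟩ := Finset.mem_sigma.mp hp
        simp only [mem_filter, mem_univ, true_and] at hpD ⊢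
        rw [smul_add, hpD.2, add_sub_cancel]
      · intro p1 hp1 p2 hp2 heq
        obtain ⟨hpT1, hpD1⟩ := Finset.mem_sigma.mp hp1
        obtain ⟨hpT2, hpD2⟩ := Finset.mem_sigma.mp hp2
        simp only [mem_filter, mem_univ, true_and] at hpD1 hpD2
        obtain ⟨-, hu⟩ := (htile (p1.1 + p1.2)).choose_spec
        have h1 : (p1.1, p1.2) = (htile (p1.1 + p1.2)).choose :=
          hu (p1.1, p1.2) ⟨(hTmem _).mp hpT1, hpD1.1, rfl⟩
        have h2 : (p2.1, p2.2) = (htile (p1.1 + p1.2)).choose :=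
          hu (p2.1, p2.2) ⟨(hTmem _).mp hpT2, hpD2.1, heq⟩
        have h12 : (p1.1, p1.2) = (p2.1, p2.2) := h1.trans h2.symm
        exact Sigma.ext (congrArg Prod.fst h12) (heq_of_eq (congrArg Prod.snd h12))
      · intro g hg
        simp only [mem_filter, mem_univ, true_and] at hg
        obtain ⟨⟨ht, hd, hgeq⟩, -⟩ := (htile g).choose_spec
        refine ⟨⟨(htile g).choose.1, (htile g).choose.2⟩, Finset.mem_sigma.mpr
          ⟨(hTmem _).mpr ht, ?_⟩, hgeq.symm⟩
        simp only [mem_filter, mem_univ, true_and]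
        refine ⟨hd, ?_⟩
        have h2 : q • g = q • (htile g).choose.1 + q • (htile g).choose.2 := by
          nth_rewrite 1 [hgeq]; rw [smul_add]
        rw [hg] at h2
        exact eq_sub_of_add_eq' h2.symm
    have hne := hnd
    simp only [List.nodup_cons, List.mem_cons, List.not_mem_nil, or_false, not_or,
      List.nodup_nil, and_true] at hne
    obtain ⟨⟨h01, h02, h03, h04, h05⟩, ⟨h12, h13, h14, h15⟩, ⟨h23, h24⟩, ⟨h34, h35⟩, h45⟩ := hne
    have hexp : c₀ = (univ.filter (fun d : G => d ∈ D ∧ q • d = q • x - q • (0 : G))).card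
        + ((univ.filter (fun d : G => d ∈ D ∧ q • d = q • x - q • s)).card
        + ((univ.filter (fun d : G => d ∈ D ∧ q • d = q • x - q • (-s))).card
        + ((univ.filter (fun d : G => d ∈ D ∧ q • d = q • x - q • s')).card
        + ((univ.filter (fun d : G => d ∈ D ∧ q • d = q • x - q • (-s'))).card
        + (univ.filter (fun d : G => d ∈ D ∧ q • d = q • x - q • s₀)).card)))) := by
      rw [← hfiber x, ← hbij, Finset.card_sigma, hT]
      rw [Finset.sum_insert (by simp [h01, h02, h03, h04, h05]),
        Finset.sum_insert (by simp [h12, h13, h14, h15]),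
        Finset.sum_insert (by simp [h23, h24]),
        Finset.sum_insert (by simp [h34, h35]),
        Finset.sum_insert (by simp [h45]),
        Finset.sum_singleton]
    rw [hn]
    simp only [smul_neg, hπs, hπs₀, neg_zero, sub_zero, smul_zero,
      sub_neg_eq_add, ← smul_sub, ← smul_add] at hexp ⊢
    omega
  -- constancy of n via max/min
  obtain ⟨x₀, -, hx₀⟩ := Finset.exists_max_image univ n ⟨0, Finset.mem_univ 0⟩
  obtain ⟨x₁, -, hx₁⟩ := Finset.exists_min_image univ n ⟨0, Finset.mem_univ 0⟩
  have e₀ := hmain x₀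
  have e₁ := hmain x₁
  have a1 := hx₁ (x₀ - s') (Finset.mem_univ _)
  have a2 := hx₁ (x₀ + s') (Finset.mem_univ _)
  have b1 := hx₀ (x₁ - s') (Finset.mem_univ _)
  have b2 := hx₀ (x₁ + s') (Finset.mem_univ _)
  have hMm := hx₁ x₀ (Finset.mem_univ _)
  have h6 : c₀ = 6 * n x₀ := by omega
  -- the kernel subgroup
  set K : AddSubgroup G :=
    { carrier := {g : G | q • g = 0}
      zero_mem' := smul_zero q
      add_mem' := by
        intro a b ha hb
        simp only [Set.mem_setOf_eq] at ha hb ⊢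
        rw [smul_add, ha, hb, add_zero]
      neg_mem' := by
        intro a ha
        simp only [Set.mem_setOf_eq] at ha ⊢
        rw [smul_neg, ha, neg_zero] } with hK
  have hcK : Fintype.card K = c₀ := by
    rw [hc₀]
    apply Fintype.card_of_subtype
    intro g
    simp [hK, AddSubgroup.mem_mk]
  haveI : Fact (Nat.Prime 3) := ⟨Nat.prime_three⟩
  obtain ⟨g, hg⟩ := exists_prime_addOrderOf_dvd_card (G := K) 3 (by rw [hcK, h6]; omega)
  have hgK : q • (g : G) = 0 := g.2
  have hgq : q • g = 0 := by
    apply Subtype.ext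
    exact hgK
  have : (3 : ℕ) ∣ q := hg ▸ addOrderOf_dvd_iff_nsmul_eq_zero.mpr hgq
  exact Nat.not_dvd_ordCompl Nat.prime_three hcard0 this

set_option maxHeartbeats 1000000 in
theorem stmt15 (G : Type*) [AddCommGroup G] [Fintype G] (s s' s₀ : G)
    (h5 : ({s, -s, s', -s', s₀} : Set G).ncard = 5)
    (h0 : addOrderOf s₀ = 2) (hs : 2 < addOrderOf s) (hs' : 2 < addOrderOf s')
    (hgen : AddSubgroup.closure ({s, -s, s', -s', s₀} : Set G) = ⊤)
    (D : Set G)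
    (hD : IsPerfectCode (cayley G ({s, -s, s', -s', s₀} : Set G)) D) :
    3 ∣ addOrderOf s ∧ 3 ∣ addOrderOf s' := by
  classical
  set S : Set G := {s, -s, s', -s', s₀} with hS
  -- basic nonzero facts
  have hsne0 : s ≠ 0 := by
    intro h; rw [h, addOrderOf_zero] at hs; omega
  have hs'ne0 : s' ≠ 0 := by
    intro h; rw [h, addOrderOf_zero] at hs'; omega
  have hs₀ne0 : s₀ ≠ 0 := by
    intro h; rw [h, addOrderOf_zero] at h0; omega
  have hnegs₀ : -s₀ = s₀ := by
    have h2 : (2 : ℕ) • s₀ = 0 := h0 ▸ addOrderOf_nsmul_eq_zero s₀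
    rw [two_nsmul] at h2
    exact neg_eq_of_add_eq_zero_left h2
  -- pairwise distinctness from h5
  have h5' : ({s, -s, s', -s', s₀} : Finset G).card = 5 := by
    have hc : ({s, -s, s', -s', s₀} : Set G) = (({s, -s, s', -s', s₀} : Finset G) : Set G) := by
      simp
    rw [hS, hc, Set.ncard_coe_finset] at h5
    exact h5
  have hnd5 : ([s, -s, s', -s', s₀] : List G).Nodup := by
    have hsub : ([s, -s, s', -s', s₀] : List G).dedup.Sublist [s, -s, s', -s', s₀] :=
      List.dedup_sublist _
    have hlen : ([s, -s, s', -s', s₀] : List G).dedup.length = 5 := by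
      rw [← List.card_toFinset]
      have : ([s, -s, s', -s', s₀] : List G).toFinset = ({s, -s, s', -s', s₀} : Finset G) := by
        simp
      rw [this, h5']
    have heq := hsub.eq_of_length (by rw [hlen]; rfl)
    rw [← heq]
    exact List.nodup_dedup _
  have hne := hnd5
  simp only [List.nodup_cons, List.mem_cons, List.not_mem_nil, or_false, not_or,
    List.nodup_nil, and_true] at hne
  obtain ⟨⟨h12, h13, h14, h15⟩, ⟨h23, h24, h25⟩, ⟨h34, h35⟩, h45⟩ := hne
  have h0s : (0 : G) ≠ s := fun h => hsne0 h.symm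
  have h0ns : (0 : G) ≠ -s := fun h => hsne0 (neg_eq_zero.mp h.symm)
  have h0s' : (0 : G) ≠ s' := fun h => hs'ne0 h.symm
  have h0ns' : (0 : G) ≠ -s' := fun h => hs'ne0 (neg_eq_zero.mp h.symm)
  have h0s₀ : (0 : G) ≠ s₀ := fun h => hs₀ne0 h.symm
  have hnd : ([0, s, -s, s', -s', s₀] : List G).Nodup := by
    simp [List.nodup_cons, h0s, h0ns, h0s', h0ns', h0s₀, h12, h13, h14, h15,
      h23, h24, h25, h34, h35, h45]
  have hnd' : ([0, s', -s', s, -s, s₀] : List G).Nodup := by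
    simp [List.nodup_cons, h0s, h0ns, h0s', h0ns', h0s₀, h34, h35, h45,
      Ne.symm h13, Ne.symm h14, Ne.symm h23, Ne.symm h24, h15, h25, h12]
  -- S is closed under negation
  have hSneg : ∀ x ∈ S, -x ∈ S := by
    intro x hx
    simp only [hS, Set.mem_insert_iff, Set.mem_singleton_iff] at hx ⊢
    rcases hx with rfl | rfl | rfl | rfl | rfl <;> simp [hnegs₀]
  have h0S : (0 : G) ∉ S := by
    intro h
    simp only [hS, Set.mem_insert_iff, Set.mem_singleton_iff] at h
    rcases h with h | h | h | h | h
    · exact h0s h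
    · exact h0ns h
    · exact h0s' h
    · exact h0ns' h
    · exact h0s₀ h
  -- the tiling
  have htile : ∀ g : G, ∃! td : G × G,
      (td.1 = 0 ∨ td.1 = s ∨ td.1 = -s ∨ td.1 = s' ∨ td.1 = -s' ∨ td.1 = s₀) ∧
      td.2 ∈ D ∧ g = td.1 + td.2 := by
    intro g
    obtain ⟨c, ⟨hcD, hcadj⟩, hu⟩ := hD g
    have hmem : g - c = 0 ∨ (g - c) ∈ S := by
      rcases hcadj with h | h
      · left; rw [h, sub_self]
      · right
        have h' : g ≠ c ∧ (c - g ∈ S ∨ g - c ∈ S) := h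
        rcases h'.2 with h2 | h2
        · have := hSneg _ h2; rwa [neg_sub] at this
        · exact h2
    refine ⟨(g - c, c), ⟨?_, hcD, (sub_add_cancel g c).symm⟩, ?_⟩
    · rcases hmem with h | h
      · exact Or.inl h
      · simp only [hS, Set.mem_insert_iff, Set.mem_singleton_iff] at h
        exact Or.inr h
    · rintro ⟨t, d⟩ ⟨hP, hdD, hg⟩
      have hgd : g - d = t := by rw [hg, add_sub_cancel_right]
      have htS : t = 0 ∨ t ∈ S := by
        simp only [hS, Set.mem_insert_iff, Set.mem_singleton_iff]
        exact hP
      have hdc : d = c := by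
        apply hu
        refine ⟨hdD, ?_⟩
        rcases htS with h | h
        · left; rw [hg, h, zero_add]
        · right
          have hne : g ≠ d := by
            intro he
            apply h0S
            have ht0 : t = 0 := by rw [← hgd, he, sub_self]
            rwa [ht0] at h
          exact ⟨hne, Or.inr (hgd ▸ h)⟩
      have htc : t = g - c := by rw [← hgd, hdc]
      exact Prod.ext htc hdc
  have htile' : ∀ g : G, ∃! td : G × G,
      (td.1 = 0 ∨ td.1 = s' ∨ td.1 = -s' ∨ td.1 = s ∨ td.1 = -s ∨ td.1 = s₀) ∧
      td.2 ∈ D ∧ g = td.1 + td.2 := by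
    have hswap : ∀ t : G, (t = 0 ∨ t = s ∨ t = -s ∨ t = s' ∨ t = -s' ∨ t = s₀) ↔
        (t = 0 ∨ t = s' ∨ t = -s' ∨ t = s ∨ t = -s ∨ t = s₀) := by
      intro t
      constructor
      · rintro (h | h | h | h | h | h)
        · exact Or.inl h
        · exact Or.inr (Or.inr (Or.inr (Or.inl h)))
        · exact Or.inr (Or.inr (Or.inr (Or.inr (Or.inl h))))
        · exact Or.inr (Or.inl h)
        · exact Or.inr (Or.inr (Or.inl h))
        · exact Or.inr (Or.inr (Or.inr (Or.inr (Or.inr h))))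
      · rintro (h | h | h | h | h | h)
        · exact Or.inl h
        · exact Or.inr (Or.inr (Or.inr (Or.inl h)))
        · exact Or.inr (Or.inr (Or.inr (Or.inr (Or.inl h))))
        · exact Or.inr (Or.inl h)
        · exact Or.inr (Or.inr (Or.inl h))
        · exact Or.inr (Or.inr (Or.inr (Or.inr (Or.inr h))))
    intro g
    obtain ⟨p, hp, hu⟩ := htile g
    exact ⟨p, ⟨(hswap p.1).mp hp.1, hp.2.1, hp.2.2⟩,
      fun y hy => hu y ⟨(hswap y.1).mpr hy.1, hy.2.1, hy.2.2⟩⟩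
  exact ⟨key_aux s s' s₀ D h0 hnd htile, key_aux s' s s₀ D h0 hnd' htile'⟩
end
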